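/- arXiv:1606.05479 — 6 statements merged into one kernel-verified Lean document; each statement's English description precedes it below -/
import Mathlib

section
/- Let w be a measurable weight on (0,∞) such that for every z ∈ ℂ₊ the function t ↦ e^{−t z̄}/w(t) belongs to L²_w(0,∞), and set k_z(ζ) := ∫₀^∞ e^{−t(ζ + z̄)}/w(t) dt for z, ζ ∈ ℂ₊. Let (λ_k)_{k∈ℕ} be a sequence in the open left half-plane, (b_k)_{k∈ℕ} a sequence of complex numbers, and μ := Σ_{k=1}^∞ |b_k|² δ_{−λ_k}. If Σ_{k=1}^∞ Σ_{l=1}^∞ |b_k b_l Re(k_{−λ_k}(−λ_l))|² < ∞, then the Laplace–Carleson embedding 𝔏 : L²_w(0,∞) → L²(ℂ₊, μ) is bounded. -/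
open MeasureTheory Set Complex Filter ENNReal

set_option maxHeartbeats 1600000

/-- The Laplace transform of `f : (0,∞) → ℂ` at `z`. -/
noncomputable def laplaceT (f : ℝ → ℂ) (z : ℂ) : ℂ :=
  ∫ t in Set.Ioi (0:ℝ), f t * Complex.exp (-(t : ℂ) * z)

/-- The norm of `f` in the weighted space `L^p_w(0,∞)` (as an extended real). -/
noncomputable def lpwNorm (p : ℝ) (w : ℝ → ℝ) (f : ℝ → ℂ) : ℝ≥0∞ :=
  (∫⁻ t in Set.Ioi (0:ℝ), (‖f t‖₊ : ℝ≥0∞) ^ p * ENNReal.ofReal (w t)) ^ (1/p)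

/-- Boundedness of the Laplace–Carleson embedding `𝔏 : L^p_w(0,∞) → L^q(ℂ₊, μ)`. -/
def lcBounded (p q : ℝ) (w : ℝ → ℝ) (μ : Measure ℂ) : Prop :=
  ∃ C > 0, ∀ f : ℝ → ℂ, Measurable f →
    (∫⁻ z, (‖laplaceT f z‖₊ : ℝ≥0∞) ^ q ∂μ) ^ (1/q) ≤ ENNReal.ofReal C * lpwNorm p w f

/-- The reproducing kernel `k_z(ζ) = ∫₀^∞ e^{-t(ζ + z̄)}/w(t) dt` of `𝔏(L²_w(0,∞))`. -/
noncomputable def kern (w : ℝ → ℝ) (z ζ : ℂ) : ℂ :=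
  ∫ t in Set.Ioi (0:ℝ), Complex.exp (-(t : ℂ) * (ζ + (starRingEnd ℂ) z)) / (w t : ℂ)

/-- Weighted Cauchy–Schwarz inequality for integrals. -/
lemma my_cs {α : Type*} [MeasurableSpace α] {μ : Measure α} {F G W : α → ℝ}
    (hW : 0 ≤ᵐ[μ] W)
    (hF : Integrable (fun t => F t ^ 2 * W t) μ) (hG : Integrable (fun t => G t ^ 2 * W t) μ)
    (hFG : Integrable (fun t => F t * G t * W t) μ) :
    ∫ t, F t * G t * W t ∂μ ≤
      Real.sqrt (∫ t, F t ^ 2 * W t ∂μ) * Real.sqrt (∫ t, G t ^ 2 * W t ∂μ) := by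
  set P := ∫ t, F t ^ 2 * W t ∂μ with hPdef
  set R := ∫ t, G t ^ 2 * W t ∂μ with hRdef
  set Q := ∫ t, F t * G t * W t ∂μ with hQdef
  have hP : 0 ≤ P := integral_nonneg_of_ae (hW.mono fun t ht => mul_nonneg (sq_nonneg _) ht)
  have hR : 0 ≤ R := integral_nonneg_of_ae (hW.mono fun t ht => mul_nonneg (sq_nonneg _) ht)
  have key : ∀ x : ℝ, 0 ≤ x ^ 2 * P - 2 * x * Q + R := by
    intro x
    have h0 : 0 ≤ ∫ t, (x * F t - G t) ^ 2 * W t ∂μ :=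
      integral_nonneg_of_ae (hW.mono fun t ht => mul_nonneg (sq_nonneg _) ht)
    have hexp : (fun t => (x * F t - G t) ^ 2 * W t) =
        (fun t => (x ^ 2 * (F t ^ 2 * W t) - 2 * x * (F t * G t * W t)) + G t ^ 2 * W t) := by
      funext t; ring
    have hsub : Integrable (fun t => x ^ 2 * (F t ^ 2 * W t) - 2 * x * (F t * G t * W t)) μ := by
      exact (hF.const_mul _).sub (hFG.const_mul _)
    rw [hexp] at h0
    rw [integral_add hsub hG,
      integral_sub (hF.const_mul _) (hFG.const_mul _), integral_const_mul,
      integral_const_mul] at h0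
    linarith
  have hQ2 : Q ^ 2 ≤ P * R := by
    rcases hP.eq_or_lt with hP0 | hP0
    · have hQ0 : Q = 0 := by
        by_contra hQne
        have h1 := key ((R + 1) / (2 * Q))
        rw [← hP0] at h1
        have h2 : 2 * ((R + 1) / (2 * Q)) * Q = R + 1 := by field_simp
        nlinarith
      rw [hQ0]
      nlinarith
    · have h1 := key (Q / P)
      have h2 : (Q / P) ^ 2 * P - 2 * (Q / P) * Q + R = R - Q ^ 2 / P := by
        field_simp; ring
      rw [h2] at h1
      have h3 : Q ^ 2 / P ≤ R := by linarith
      calc Q ^ 2 = Q ^ 2 / P * P := by field_simp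
      _ ≤ R * P := by apply mul_le_mul_of_nonneg_right h3 hP
      _ = P * R := by ring
  calc Q ≤ |Q| := le_abs_self Q
  _ = Real.sqrt (Q ^ 2) := (Real.sqrt_sq_eq_abs Q).symm
  _ ≤ Real.sqrt (P * R) := Real.sqrt_le_sqrt hQ2
  _ = Real.sqrt P * Real.sqrt R := Real.sqrt_mul hP R

lemma kern_meas (w : ℝ → ℝ) (hw : Measurable w) (u : ℂ) :
    Measurable (fun t : ℝ => Complex.exp (-(t : ℂ) * u) / (w t : ℂ)) := by fun_prop

lemma norm_exp_aux (t : ℝ) (u : ℂ) : ‖Complex.exp (-(t : ℂ) * u)‖ = Real.exp (-(u.re * t)) := by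
  rw [Complex.norm_exp]
  congr 1
  simp [Complex.mul_re]; ring

lemma norm_kern_integrand (w : ℝ → ℝ) {t : ℝ} (hwt : 0 < w t) (u : ℂ) :
    ‖Complex.exp (-(t : ℂ) * u) / (w t : ℂ)‖ = Real.exp (-(u.re * t)) / w t := by
  rw [norm_div, norm_exp_aux]
  congr 1
  rw [Complex.norm_real, Real.norm_of_nonneg hwt.le]

lemma phi_integrable (w : ℝ → ℝ) (hw : Measurable w) (hwpos : ∀ t > 0, 0 < w t) {z : ℂ}
    (h : lpwNorm 2 w (fun t => Complex.exp (-(t : ℂ) * (starRingEnd ℂ) z) / (w t : ℂ)) < ⊤) :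
    IntegrableOn (fun t : ℝ => Real.exp (-(2 * z.re) * t) / w t) (Ioi (0:ℝ)) := by
  have hmeas : Measurable (fun t : ℝ => Real.exp (-(2 * z.re) * t) / w t) :=
    (Real.measurable_exp.comp (measurable_const.mul measurable_id)).div hw
  have hfin : (∫⁻ t in Ioi (0:ℝ),
      (‖Complex.exp (-(t : ℂ) * (starRingEnd ℂ) z) / (w t : ℂ)‖₊ : ℝ≥0∞) ^ (2:ℝ)
        * ENNReal.ofReal (w t)) ≠ ⊤ := by
    intro htop
    rw [lpwNorm, htop] at h
    simp [ENNReal.top_rpow_of_pos] at h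
  have hcong : ∀ t ∈ Ioi (0:ℝ),
      ENNReal.ofReal (Real.exp (-(2 * z.re) * t) / w t) =
      (‖Complex.exp (-(t : ℂ) * (starRingEnd ℂ) z) / (w t : ℂ)‖₊ : ℝ≥0∞) ^ (2:ℝ)
        * ENNReal.ofReal (w t) := by
    intro t ht
    have hwt := hwpos t ht
    rw [← enorm_eq_nnnorm, ← ofReal_norm, norm_kern_integrand w hwt,
      ENNReal.ofReal_rpow_of_nonneg (by positivity) (by norm_num),
      ← ENNReal.ofReal_mul (by positivity)]
    congr 1
    rw [Complex.conj_re]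
    rw [Real.rpow_two]
    field_simp
    have hexp2 : (Real.exp (-(z.re * t))) ^ 2 = Real.exp (-(2 * z.re * t)) := by
      rw [sq, ← Real.exp_add]; ring_nf
    rw [← hexp2]
  constructor
  · exact hmeas.aestronglyMeasurable
  · rw [HasFiniteIntegral]
    have : ∫⁻ t in Ioi (0:ℝ), (‖Real.exp (-(2 * z.re) * t) / w t‖₊ : ℝ≥0∞) =
        ∫⁻ t in Ioi (0:ℝ),
          (‖Complex.exp (-(t : ℂ) * (starRingEnd ℂ) z) / (w t : ℂ)‖₊ : ℝ≥0∞) ^ (2:ℝ)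
            * ENNReal.ofReal (w t) := by
      apply setLIntegral_congr_fun_ae measurableSet_Ioi
      filter_upwards with t ht
      rw [← hcong t ht, ← enorm_eq_nnnorm, ← ofReal_norm, Real.norm_of_nonneg]
      have := hwpos t ht
      positivity
    simp only [enorm_eq_nnnorm]
    rw [this]
    exact hfin.lt_top

lemma kern_integrand_integrable (w : ℝ → ℝ) (hw : Measurable w) (hwpos : ∀ t > 0, 0 < w t)
    {z ζ : ℂ}
    (hφz : IntegrableOn (fun t : ℝ => Real.exp (-(2 * z.re) * t) / w t) (Ioi (0:ℝ)))
    (hφζ : IntegrableOn (fun t : ℝ => Real.exp (-(2 * ζ.re) * t) / w t) (Ioi (0:ℝ))) :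
    IntegrableOn (fun t : ℝ => Complex.exp (-(t : ℂ) * (ζ + (starRingEnd ℂ) z)) / (w t : ℂ))
      (Ioi (0:ℝ)) := by
  apply Integrable.mono' ((hφz.add hφζ).div_const 2)
    ((kern_meas w hw _).aestronglyMeasurable)
  rw [ae_restrict_iff' measurableSet_Ioi]
  filter_upwards with t ht
  have hwt := hwpos t ht
  rw [norm_kern_integrand w hwt]
  have hre : (ζ + (starRingEnd ℂ) z).re = ζ.re + z.re := by simp
  rw [hre]
  have e1 : Real.exp (-(2 * z.re) * t) = Real.exp (-(z.re * t)) ^ 2 := by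
    rw [sq, ← Real.exp_add]; ring_nf
  have e2 : Real.exp (-(2 * ζ.re) * t) = Real.exp (-(ζ.re * t)) ^ 2 := by
    rw [sq, ← Real.exp_add]; ring_nf
  have hprod : Real.exp (-((ζ.re + z.re) * t)) =
      Real.exp (-(z.re * t)) * Real.exp (-(ζ.re * t)) := by
    rw [← Real.exp_add]; ring_nf
  have h1 : Real.exp (-((ζ.re + z.re) * t)) ≤
      (Real.exp (-(2 * z.re) * t) + Real.exp (-(2 * ζ.re) * t)) / 2 := by
    rw [hprod, e1, e2]
    nlinarith [sq_nonneg (Real.exp (-(z.re * t)) - Real.exp (-(ζ.re * t)))]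
  calc Real.exp (-((ζ.re + z.re) * t)) / w t
      ≤ ((Real.exp (-(2 * z.re) * t) + Real.exp (-(2 * ζ.re) * t)) / 2) / w t := by gcongr
    _ = (Real.exp (-(2 * z.re) * t) / w t + Real.exp (-(2 * ζ.re) * t) / w t) / 2 := by ring

lemma laplace_integrand_integrable (w : ℝ → ℝ) (hwpos : ∀ t > 0, 0 < w t)
    {f : ℝ → ℂ} (hf : Measurable f)
    (hf2 : IntegrableOn (fun t : ℝ => ‖f t‖ ^ 2 * w t) (Ioi (0:ℝ)))
    {z : ℂ}
    (hφz : IntegrableOn (fun t : ℝ => Real.exp (-(2 * z.re) * t) / w t) (Ioi (0:ℝ))) :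
    IntegrableOn (fun t : ℝ => f t * Complex.exp (-(t : ℂ) * z)) (Ioi (0:ℝ)) := by
  apply Integrable.mono' ((hf2.add hφz).div_const 2)
  · apply Measurable.aestronglyMeasurable; fun_prop
  rw [ae_restrict_iff' measurableSet_Ioi]
  filter_upwards with t ht
  have hwt := hwpos t ht
  rw [norm_mul, norm_exp_aux]
  set C := Real.exp (-(z.re * t)) with hC
  have e1 : Real.exp (-(2 * z.re) * t) = C ^ 2 := by
    rw [hC, sq, ← Real.exp_add]; ring_nf
  simp only [Pi.add_apply]
  rw [e1]
  have key2 : 2 * (‖f t‖ * C) * w t ≤ (‖f t‖ ^ 2 * w t) * w t + C ^ 2 := by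
    nlinarith [sq_nonneg (‖f t‖ * w t - C)]
  have h3 : 2 * (‖f t‖ * C) - ‖f t‖ ^ 2 * w t ≤ C ^ 2 / w t := by
    rw [le_div_iff₀ hwt]
    nlinarith
  linarith

lemma expand_norm_sq (w : ℝ → ℝ) (hw : Measurable w) (hwpos : ∀ t > 0, 0 < w t)
    (z : ℕ → ℂ) (F : Finset ℕ)
    (hφ : ∀ k, IntegrableOn (fun t : ℝ => Real.exp (-(2 * (z k).re) * t) / w t) (Ioi (0:ℝ)))
    (x : ℕ → ℝ) :
    IntegrableOn (fun t : ℝ => ‖∑ k ∈ F, (x k : ℂ) *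
        (Complex.exp (-(t : ℂ) * (starRingEnd ℂ) (z k)) / (w t : ℂ))‖ ^ 2 * w t) (Ioi (0:ℝ)) ∧
    ∫ t in Ioi (0:ℝ), ‖∑ k ∈ F, (x k : ℂ) *
        (Complex.exp (-(t : ℂ) * (starRingEnd ℂ) (z k)) / (w t : ℂ))‖ ^ 2 * w t
      = ∑ k ∈ F, ∑ l ∈ F, x k * x l * (kern w (z k) (z l)).re := by
  set K : ℕ → ℝ → ℂ := fun k t => Complex.exp (-(t : ℂ) * (starRingEnd ℂ) (z k)) / (w t : ℂ)
    with hK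
  set P : ℕ → ℕ → ℝ → ℂ :=
    fun k l t => Complex.exp (-(t : ℂ) * (z l + (starRingEnd ℂ) (z k))) / (w t : ℂ) with hP
  have hPint : ∀ k l, IntegrableOn (P k l) (Ioi (0:ℝ)) :=
    fun k l => kern_integrand_integrable w hw hwpos (hφ k) (hφ l)
  have hPkern : ∀ k l, ∫ t in Ioi (0:ℝ), P k l t = kern w (z k) (z l) := fun k l => rfl
  have hpt : ∀ t ∈ Ioi (0:ℝ), ‖∑ k ∈ F, (x k : ℂ) * K k t‖ ^ 2 * w t
      = ∑ k ∈ F, ∑ l ∈ F, x k * x l * (P k l t).re := by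
    intro t ht
    have hwt := hwpos t ht
    have hwne : (w t : ℂ) ≠ 0 := by
      simpa using ne_of_gt hwt
    have hKP : ∀ k l, K k t * (starRingEnd ℂ) (K l t) * (w t : ℂ) = P k l t := by
      intro k l
      rw [hK, hP]
      simp only [map_div₀, ← Complex.exp_conj, Complex.conj_ofReal, map_mul, map_neg,
        Complex.conj_conj]
      rw [div_mul_div_comm, ← Complex.exp_add]
      field_simp
      ring_nf
    have hnsq : ‖∑ k ∈ F, (x k : ℂ) * K k t‖ ^ 2 * w t =
        ((∑ k ∈ F, (x k : ℂ) * K k t) *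
          (starRingEnd ℂ) (∑ l ∈ F, (x l : ℂ) * K l t) * (w t : ℂ)).re := by
      rw [Complex.mul_conj]
      rw [← Complex.ofReal_mul]
      rw [Complex.ofReal_re]
      rw [Complex.normSq_eq_norm_sq]
    rw [hnsq, map_sum, Finset.sum_mul_sum, Finset.sum_mul, Complex.re_sum]
    apply Finset.sum_congr rfl
    intro k _
    rw [Finset.sum_mul, Complex.re_sum]
    apply Finset.sum_congr rfl
    intro l _
    have : (x k : ℂ) * K k t * ((starRingEnd ℂ) ((x l : ℂ) * K l t)) * (w t : ℂ)
        = ((x k * x l : ℝ) : ℂ) * P k l t := by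
      rw [map_mul, Complex.conj_ofReal, ← hKP k l]
      push_cast
      ring
    rw [this, Complex.re_ofReal_mul]
  have hRint : IntegrableOn
      (fun t : ℝ => ∑ k ∈ F, ∑ l ∈ F, x k * x l * (P k l t).re) (Ioi (0:ℝ)) := by
    apply integrable_finset_sum
    intro k _
    apply integrable_finset_sum
    intro l _
    exact ((hPint k l).re.const_mul _)
  constructor
  · apply hRint.congr
    rw [Filter.EventuallyEq, ae_restrict_iff' measurableSet_Ioi]
    filter_upwards with t ht
    exact (hpt t ht).symm
  · have hint : ∀ k l : ℕ, Integrable (fun t : ℝ => x k * x l * (P k l t).re)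
        (volume.restrict (Ioi (0:ℝ))) := fun k l => (hPint k l).re.const_mul _
    rw [setIntegral_congr_fun measurableSet_Ioi hpt]
    rw [integral_finset_sum _ (fun k _ => integrable_finset_sum _ (fun l _ => hint k l))]
    apply Finset.sum_congr rfl
    intro k _
    rw [integral_finset_sum _ (fun l _ => hint k l)]
    apply Finset.sum_congr rfl
    intro l _
    rw [integral_const_mul]
    congr 1
    have h := integral_re (hPint k l)
    simp only [RCLike.re_to_complex] at h
    rw [← hPkern k l, ← h]

/-- if `Σ_k Σ_l |b_k b_l Re(k_{-λ_k}(-λ_l))|² < ∞` then the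
Laplace–Carleson embedding `𝔏 : L²_w(0,∞) → L²(ℂ₊, μ)` is bounded. -/
theorem laplace_carleson_bounded_of_kernel_square_summable
    (w : ℝ → ℝ) (hw : Measurable w) (hwpos : ∀ t > 0, 0 < w t)
    (hker : ∀ z : ℂ, 0 < z.re →
      lpwNorm 2 w (fun t => Complex.exp (-(t : ℂ) * (starRingEnd ℂ) z) / (w t : ℂ)) < ⊤)
    (lam : ℕ → ℂ) (hlam : ∀ k, (lam k).re < 0) (b : ℕ → ℂ)
    (μ : Measure ℂ)
    (hμ : μ = Measure.sum fun k : ℕ =>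
      (ENNReal.ofReal (‖b k‖ ^ 2)) • Measure.dirac (-(lam k)))
    (hsum : Summable fun kl : ℕ × ℕ =>
      (‖b kl.1‖ * ‖b kl.2‖ * |(kern w (-(lam kl.1)) (-(lam kl.2))).re|) ^ 2) :
    lcBounded 2 2 w μ := by
  have hS2nn : (0:ℝ) ≤ ∑' kl : ℕ × ℕ,
      (‖b kl.1‖ * ‖b kl.2‖ * |(kern w (-(lam kl.1)) (-(lam kl.2))).re|) ^ 2 :=
    tsum_nonneg (fun _ => sq_nonneg _)
  set S2 : ℝ := ∑' kl : ℕ × ℕ,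
      (‖b kl.1‖ * ‖b kl.2‖ * |(kern w (-(lam kl.1)) (-(lam kl.2))).re|) ^ 2 with hS2def
  set S : ℝ := Real.sqrt S2 with hSdef
  have hS0 : 0 ≤ S := Real.sqrt_nonneg _
  set C : ℝ := 2 * Real.sqrt S + 1 with hCdef
  have hC : 0 < C := by positivity
  refine ⟨C, hC, ?_⟩
  intro f hf
  set A := ∫⁻ t in Ioi (0:ℝ), (‖f t‖₊ : ℝ≥0∞) ^ (2:ℝ) * ENNReal.ofReal (w t) with hAdef
  have hlpw : lpwNorm 2 w f = A ^ (1/(2:ℝ)) := rfl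
  by_cases hA : A = ⊤
  · rw [hlpw, hA, ENNReal.top_rpow_of_pos (by norm_num), ENNReal.mul_top
      (by simp only [ne_eq, ENNReal.ofReal_eq_zero, not_le]; exact hC)]
    exact le_top
  -- main case
  have hAeq : ∫⁻ t in Ioi (0:ℝ), ENNReal.ofReal (‖f t‖ ^ 2 * w t) = A := by
    rw [hAdef]
    apply setLIntegral_congr_fun_ae measurableSet_Ioi
    filter_upwards with t ht
    rw [← enorm_eq_nnnorm, ← ofReal_norm, ENNReal.ofReal_rpow_of_nonneg (norm_nonneg _) (by norm_num),
      Real.rpow_two, ← ENNReal.ofReal_mul (by positivity)]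
  have hf2 : IntegrableOn (fun t : ℝ => ‖f t‖ ^ 2 * w t) (Ioi (0:ℝ)) := by
    constructor
    · apply Measurable.aestronglyMeasurable; fun_prop
    · rw [HasFiniteIntegral]
      have h1 : ∫⁻ t in Ioi (0:ℝ), (‖(‖f t‖ ^ 2 * w t)‖₊ : ℝ≥0∞)
          = ∫⁻ t in Ioi (0:ℝ), ENNReal.ofReal (‖f t‖ ^ 2 * w t) := by
        apply setLIntegral_congr_fun_ae measurableSet_Ioi
        filter_upwards with t ht
        rw [← enorm_eq_nnnorm, ← ofReal_norm, Real.norm_of_nonneg]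
        have := hwpos t ht
        positivity
      simp only [enorm_eq_nnnorm]
      rw [h1, hAeq]
      exact lt_top_iff_ne_top.mpr hA
  have hNf : ∫ t in Ioi (0:ℝ), ‖f t‖ ^ 2 * w t = A.toReal := by
    rw [integral_eq_lintegral_of_nonneg_ae ?_ hf2.1, hAeq]
    rw [EventuallyLE, ae_restrict_iff' measurableSet_Ioi]
    filter_upwards with t ht
    have := hwpos t ht
    positivity
  have hAtR : 0 ≤ A.toReal := ENNReal.toReal_nonneg
  set z : ℕ → ℂ := fun k => -(lam k) with hzdef
  have hzre : ∀ k, 0 < (z k).re := fun k => by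
    rw [hzdef]; simp only [Complex.neg_re]; linarith [hlam k]
  have hφ : ∀ k, IntegrableOn (fun t : ℝ => Real.exp (-(2 * (z k).re) * t) / w t) (Ioi (0:ℝ)) :=
    fun k => phi_integrable w hw hwpos (hker (z k) (hzre k))
  set c : ℕ → ℂ := fun k => laplaceT f (z k) with hcdef
  have hcint : ∀ k, IntegrableOn (fun t : ℝ => f t * Complex.exp (-(t : ℂ) * z k)) (Ioi (0:ℝ)) :=
    fun k => laplace_integrand_integrable w hwpos hf hf2 (hφ k)
  -- the key finite-sum bound
  have key : ∀ F : Finset ℕ, ∑ k ∈ F, ‖b k‖ ^ 2 * ‖c k‖ ^ 2 ≤ 4 * S * A.toReal := by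
    intro F
    set SF := ∑ k ∈ F, ‖b k‖ ^ 2 * ‖c k‖ ^ 2 with hSFdef
    have hSF0 : 0 ≤ SF := Finset.sum_nonneg fun k _ => by positivity
    -- bound for double sums
    have hdb : ∀ x : ℕ → ℝ, (∀ k, |x k| ≤ ‖b k‖ ^ 2 * ‖c k‖) →
        ∑ k ∈ F, ∑ l ∈ F, x k * x l * (kern w (z k) (z l)).re ≤ SF * S := by
      intro x hx
      set u : ℕ → ℝ := fun k => ‖b k‖ * ‖c k‖ with hudef
      set m : ℕ × ℕ → ℝ :=
        fun p => ‖b p.1‖ * ‖b p.2‖ * |(kern w (z p.1) (z p.2)).re| with hmdef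
      have hu0 : ∀ k, 0 ≤ u k := fun k => by rw [hudef]; positivity
      have hm0 : ∀ p, 0 ≤ m p := fun p => by rw [hmdef]; positivity
      have h1 : ∑ k ∈ F, ∑ l ∈ F, x k * x l * (kern w (z k) (z l)).re
          ≤ ∑ p ∈ F ×ˢ F, (u p.1 * u p.2) * m p := by
        rw [Finset.sum_product]
        apply Finset.sum_le_sum; intro k _
        apply Finset.sum_le_sum; intro l _
        calc x k * x l * (kern w (z k) (z l)).re
            ≤ |x k * x l * (kern w (z k) (z l)).re| := le_abs_self _
          _ = |x k| * |x l| * |(kern w (z k) (z l)).re| := by rw [abs_mul, abs_mul]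
          _ ≤ (‖b k‖ ^ 2 * ‖c k‖) * (‖b l‖ ^ 2 * ‖c l‖) * |(kern w (z k) (z l)).re| := by
              apply mul_le_mul_of_nonneg_right ?_ (abs_nonneg _)
              exact mul_le_mul (hx k) (hx l) (abs_nonneg _) (by positivity)
          _ = (u k * u l) * m (k, l) := by rw [hudef, hmdef]; ring
      have hcs := Finset.sum_mul_sq_le_sq_mul_sq (F ×ˢ F) (fun p => u p.1 * u p.2) m
      have hu2 : ∑ p ∈ F ×ˢ F, (u p.1 * u p.2) ^ 2 = SF ^ 2 := by
        have e1 : ∑ p ∈ F ×ˢ F, (u p.1 * u p.2) ^ 2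
            = ∑ k ∈ F, ∑ l ∈ F, u k ^ 2 * u l ^ 2 := by
          rw [Finset.sum_product]
          exact Finset.sum_congr rfl fun k _ => Finset.sum_congr rfl fun l _ => by ring
        rw [e1, ← Finset.sum_mul_sum]
        have e2 : ∑ k ∈ F, u k ^ 2 = SF := by
          rw [hSFdef]
          exact Finset.sum_congr rfl fun k _ => by rw [hudef]; ring
        rw [e2, sq]
      have hm2 : ∑ p ∈ F ×ˢ F, m p ^ 2 ≤ S2 := by
        rw [hS2def]
        have e3 : ∀ p : ℕ × ℕ, m p ^ 2
            = (‖b p.1‖ * ‖b p.2‖ * |(kern w (-(lam p.1)) (-(lam p.2))).re|) ^ 2 := by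
          intro p; simp only [hmdef, hzdef]
        rw [Finset.sum_congr rfl (fun p _ => e3 p)]
        exact hsum.sum_le_tsum _ (fun p _ => sq_nonneg _)
      have hT0 : 0 ≤ ∑ p ∈ F ×ˢ F, (u p.1 * u p.2) * m p :=
        Finset.sum_nonneg fun p _ => mul_nonneg (mul_nonneg (hu0 _) (hu0 _)) (hm0 _)
      have hsq : (∑ p ∈ F ×ˢ F, (u p.1 * u p.2) * m p) ^ 2 ≤ (SF * S) ^ 2 := by
        have hSsq : S ^ 2 = S2 := Real.sq_sqrt hS2nn
        calc (∑ p ∈ F ×ˢ F, (u p.1 * u p.2) * m p) ^ 2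
            ≤ (∑ p ∈ F ×ˢ F, (u p.1 * u p.2) ^ 2) * ∑ p ∈ F ×ˢ F, m p ^ 2 := hcs
          _ ≤ SF ^ 2 * S2 := by rw [hu2]; exact mul_le_mul_of_nonneg_left hm2 (sq_nonneg _)
          _ = (SF * S) ^ 2 := by rw [← hSsq]; ring
      have h2 : ∑ p ∈ F ×ˢ F, (u p.1 * u p.2) * m p ≤ SF * S := by
        have h3 := Real.sqrt_le_sqrt hsq
        rwa [Real.sqrt_sq hT0, Real.sqrt_sq (mul_nonneg hSF0 hS0)] at h3
      exact h1.trans h2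
    -- coefficients
    set r : ℕ → ℝ := fun k => ‖b k‖ ^ 2 * (c k).re with hrdef
    set s : ℕ → ℝ := fun k => ‖b k‖ ^ 2 * (c k).im with hsdef
    obtain ⟨hgrI, hgrE⟩ := expand_norm_sq w hw hwpos z F hφ r
    obtain ⟨hgsI, hgsE⟩ := expand_norm_sq w hw hwpos z F hφ s
    have hrb : ∀ k, |r k| ≤ ‖b k‖ ^ 2 * ‖c k‖ := by
      intro k
      have hrk : r k = ‖b k‖ ^ 2 * (c k).re := rfl
      rw [hrk, abs_mul, _root_.abs_of_nonneg (by positivity : (0:ℝ) ≤ ‖b k‖ ^ 2)]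
      apply mul_le_mul_of_nonneg_left _ (by positivity)
      exact Complex.abs_re_le_norm _
    have hsb : ∀ k, |s k| ≤ ‖b k‖ ^ 2 * ‖c k‖ := by
      intro k
      have hsk : s k = ‖b k‖ ^ 2 * (c k).im := rfl
      rw [hsk, abs_mul, _root_.abs_of_nonneg (by positivity : (0:ℝ) ≤ ‖b k‖ ^ 2)]
      apply mul_le_mul_of_nonneg_left _ (by positivity)
      exact Complex.abs_im_le_norm _
    set gr : ℝ → ℂ := fun t => ∑ k ∈ F, (r k : ℂ) *
        (Complex.exp (-(t : ℂ) * (starRingEnd ℂ) (z k)) / (w t : ℂ)) with hgrdef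
    set gs : ℝ → ℂ := fun t => ∑ k ∈ F, (s k : ℂ) *
        (Complex.exp (-(t : ℂ) * (starRingEnd ℂ) (z k)) / (w t : ℂ)) with hgsdef
    set g : ℝ → ℂ := fun t => ∑ k ∈ F, (((‖b k‖ ^ 2 : ℝ) : ℂ) * c k) *
        (Complex.exp (-(t : ℂ) * (starRingEnd ℂ) (z k)) / (w t : ℂ)) with hgdef
    have hgsplit : ∀ t : ℝ, g t = gr t + Complex.I * gs t := by
      intro t
      rw [hgdef, hgrdef, hgsdef]
      simp only
      rw [Finset.mul_sum, ← Finset.sum_add_distrib]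
      apply Finset.sum_congr rfl
      intro k _
      have hrk : r k = ‖b k‖ ^ 2 * (c k).re := rfl
      have hsk : s k = ‖b k‖ ^ 2 * (c k).im := rfl
      have hcoef : ((‖b k‖ ^ 2 : ℝ) : ℂ) * c k = (r k : ℂ) + Complex.I * (s k : ℂ) := by
        rw [hrk, hsk]
        apply Complex.ext <;> simp [Complex.mul_re, Complex.mul_im] <;> ring
      rw [hcoef]; ring
    have hgmeas : Measurable g := by
      rw [hgdef]
      apply Finset.measurable_sum
      intro k _
      exact measurable_const.mul (kern_meas w hw _)
    have hgptbd : ∀ t ∈ Ioi (0:ℝ), ‖g t‖ ^ 2 * w t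
        ≤ 2 * (‖gr t‖ ^ 2 * w t) + 2 * (‖gs t‖ ^ 2 * w t) := by
      intro t ht
      have hwt := (hwpos t ht).le
      have h1 : ‖g t‖ ≤ ‖gr t‖ + ‖gs t‖ := by
        rw [hgsplit t]
        refine (norm_add_le _ _).trans ?_
        rw [norm_mul, Complex.norm_I, one_mul]
      have h2 : ‖g t‖ ^ 2 ≤ 2 * ‖gr t‖ ^ 2 + 2 * ‖gs t‖ ^ 2 := by
        nlinarith [norm_nonneg (g t), norm_nonneg (gr t), norm_nonneg (gs t),
          sq_nonneg (‖gr t‖ - ‖gs t‖)]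
      nlinarith [mul_le_mul_of_nonneg_right h2 hwt]
    have hRHSint : IntegrableOn
        (fun t : ℝ => 2 * (‖gr t‖ ^ 2 * w t) + 2 * (‖gs t‖ ^ 2 * w t)) (Ioi (0:ℝ)) :=
      (hgrI.const_mul 2).add (hgsI.const_mul 2)
    have hgI : IntegrableOn (fun t : ℝ => ‖g t‖ ^ 2 * w t) (Ioi (0:ℝ)) := by
      apply Integrable.mono' hRHSint
      · apply Measurable.aestronglyMeasurable
        exact (hgmeas.norm.pow_const 2).mul hw
      · rw [ae_restrict_iff' measurableSet_Ioi]
        filter_upwards with t ht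
        rw [Real.norm_of_nonneg (by have := hwpos t ht; positivity)]
        exact hgptbd t ht
    have hIg4 : ∫ t in Ioi (0:ℝ), ‖g t‖ ^ 2 * w t ≤ 4 * (SF * S) := by
      have h1 : ∫ t in Ioi (0:ℝ), ‖g t‖ ^ 2 * w t
          ≤ ∫ t in Ioi (0:ℝ), (2 * (‖gr t‖ ^ 2 * w t) + 2 * (‖gs t‖ ^ 2 * w t)) :=
        setIntegral_mono_on hgI hRHSint measurableSet_Ioi hgptbd
      rw [integral_add (hgrI.const_mul 2) (hgsI.const_mul 2), integral_const_mul,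
        integral_const_mul, hgrE, hgsE] at h1
      have h2 := hdb r hrb
      have h3 := hdb s hsb
      linarith
    -- the pairing identity
    set q : ℝ → ℂ := fun t => ∑ k ∈ F, (starRingEnd ℂ) (((‖b k‖ ^ 2 : ℝ) : ℂ) * c k) *
        (f t * Complex.exp (-(t : ℂ) * z k)) with hqdef
    have hqint : IntegrableOn q (Ioi (0:ℝ)) :=
      integrable_finset_sum _ (fun k _ => (hcint k).const_mul _)
    have hqg : ∀ t ∈ Ioi (0:ℝ), f t * (starRingEnd ℂ) (g t) * (w t : ℂ) = q t := by
      intro t ht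
      have hwt := hwpos t ht
      have hwne : (w t : ℂ) ≠ 0 := by simpa using ne_of_gt hwt
      rw [hgdef, hqdef]
      simp only
      rw [map_sum, Finset.mul_sum, Finset.sum_mul]
      apply Finset.sum_congr rfl
      intro k _
      simp only [hzdef, map_mul, map_div₀, map_neg, ← Complex.exp_conj, Complex.conj_ofReal,
        Complex.conj_conj]
      field_simp
    have hqSF : (∫ t in Ioi (0:ℝ), q t).re = SF := by
      rw [hqdef]
      rw [integral_finset_sum _ (fun k _ => (hcint k).const_mul _)]
      rw [Complex.re_sum, hSFdef]
      apply Finset.sum_congr rfl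
      intro k _
      rw [integral_const_mul]
      have hck : ∫ t in Ioi (0:ℝ), f t * Complex.exp (-(t : ℂ) * z k) = c k := rfl
      rw [hck, map_mul, Complex.conj_ofReal, mul_assoc, mul_comm ((starRingEnd ℂ) (c k)) (c k),
        Complex.mul_conj, ← Complex.ofReal_mul, Complex.ofReal_re,
        Complex.normSq_eq_norm_sq]
    have hSFle1 : SF ≤ ∫ t in Ioi (0:ℝ), ‖f t‖ * ‖g t‖ * w t := by
      rw [← hqSF]
      have e4 : ∫ t in Ioi (0:ℝ), ‖f t‖ * ‖g t‖ * w t = ∫ t in Ioi (0:ℝ), ‖q t‖ := by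
        apply setIntegral_congr_fun measurableSet_Ioi
        intro t ht
        show ‖f t‖ * ‖g t‖ * w t = ‖q t‖
        rw [← hqg t ht]
        have hwt := hwpos t ht
        rw [norm_mul, norm_mul, RCLike.norm_conj, Complex.norm_real,
          Real.norm_of_nonneg hwt.le]
      rw [e4]
      calc (∫ t in Ioi (0:ℝ), q t).re ≤ |(∫ t in Ioi (0:ℝ), q t).re| := le_abs_self _
        _ ≤ ‖∫ t in Ioi (0:ℝ), q t‖ := Complex.abs_re_le_norm _
        _ ≤ ∫ t in Ioi (0:ℝ), ‖q t‖ := norm_integral_le_integral_norm _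
    have hfgwint : Integrable (fun t : ℝ => ‖f t‖ * ‖g t‖ * w t)
        (volume.restrict (Ioi (0:ℝ))) := by
      apply hqint.norm.congr
      rw [Filter.EventuallyEq, ae_restrict_iff' measurableSet_Ioi]
      filter_upwards with t ht
      show ‖q t‖ = ‖f t‖ * ‖g t‖ * w t
      rw [← hqg t ht]
      have hwt := hwpos t ht
      rw [norm_mul, norm_mul, RCLike.norm_conj, Complex.norm_real, Real.norm_of_nonneg hwt.le]
    have hCS : ∫ t in Ioi (0:ℝ), ‖f t‖ * ‖g t‖ * w t
        ≤ Real.sqrt (∫ t in Ioi (0:ℝ), ‖f t‖ ^ 2 * w t) *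
          Real.sqrt (∫ t in Ioi (0:ℝ), ‖g t‖ ^ 2 * w t) := by
      apply my_cs _ hf2 hgI hfgwint
      rw [EventuallyLE, ae_restrict_iff' measurableSet_Ioi]
      filter_upwards with t ht
      exact (hwpos t ht).le
    have h5 : SF ≤ Real.sqrt A.toReal * Real.sqrt (4 * (SF * S)) := by
      calc SF ≤ ∫ t in Ioi (0:ℝ), ‖f t‖ * ‖g t‖ * w t := hSFle1
        _ ≤ Real.sqrt (∫ t in Ioi (0:ℝ), ‖f t‖ ^ 2 * w t) *
            Real.sqrt (∫ t in Ioi (0:ℝ), ‖g t‖ ^ 2 * w t) := hCS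
        _ ≤ Real.sqrt A.toReal * Real.sqrt (4 * (SF * S)) := by
            rw [hNf]
            exact mul_le_mul_of_nonneg_left (Real.sqrt_le_sqrt hIg4) (Real.sqrt_nonneg _)
    rcases hSF0.eq_or_lt with hSF | hSF
    · rw [← hSF]; positivity
    · have hsq5 := mul_self_le_mul_self hSF0 h5
      have e5 : (Real.sqrt A.toReal * Real.sqrt (4 * (SF * S))) *
          (Real.sqrt A.toReal * Real.sqrt (4 * (SF * S))) = A.toReal * (4 * (SF * S)) := by
        rw [mul_mul_mul_comm, Real.mul_self_sqrt hAtR,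
          Real.mul_self_sqrt (by positivity)]
      rw [e5] at hsq5
      have e6 : A.toReal * (4 * (SF * S)) = (4 * S * A.toReal) * SF := by ring
      rw [e6] at hsq5
      exact le_of_mul_le_mul_right hsq5 hSF
  -- ENNReal conclusion
  have hLHS : (∫⁻ ζ, (‖laplaceT f ζ‖₊ : ℝ≥0∞) ^ (2:ℝ) ∂μ)
      = ∑' k : ℕ, ENNReal.ofReal (‖b k‖ ^ 2 * ‖c k‖ ^ 2) := by
    rw [hμ, lintegral_sum_measure]
    congr 1; funext k
    rw [lintegral_smul_measure, lintegral_dirac]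
    rw [← enorm_eq_nnnorm, ← ofReal_norm, ENNReal.ofReal_rpow_of_nonneg (norm_nonneg _) (by norm_num),
      Real.rpow_two, smul_eq_mul, ← ENNReal.ofReal_mul (by positivity)]
  have hsum_le : ∑' k : ℕ, ENNReal.ofReal (‖b k‖ ^ 2 * ‖c k‖ ^ 2)
      ≤ ENNReal.ofReal (4 * S * A.toReal) := by
    rw [ENNReal.tsum_eq_iSup_sum]
    apply iSup_le
    intro F
    rw [← ENNReal.ofReal_sum_of_nonneg (fun i _ => by positivity)]
    exact ENNReal.ofReal_le_ofReal (key F)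
  have hC2 : 4 * S * A.toReal ≤ C ^ 2 * A.toReal := by
    have h8 : (2 * Real.sqrt S) ^ 2 = 4 * S := by
      rw [mul_pow, Real.sq_sqrt hS0]; norm_num
    have h9 : (2 * Real.sqrt S) ^ 2 ≤ (2 * Real.sqrt S + 1) ^ 2 := by
      apply pow_le_pow_left₀ (by positivity) (by linarith) 2
    have h10 : 4 * S ≤ C ^ 2 := by rw [hCdef]; linarith
    exact mul_le_mul_of_nonneg_right h10 hAtR
  have hfinal : (∫⁻ ζ, (‖laplaceT f ζ‖₊ : ℝ≥0∞) ^ (2:ℝ) ∂μ) ≤ ENNReal.ofReal (C ^ 2) * A := by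
    rw [hLHS]
    calc ∑' k : ℕ, ENNReal.ofReal (‖b k‖ ^ 2 * ‖c k‖ ^ 2)
        ≤ ENNReal.ofReal (4 * S * A.toReal) := hsum_le
      _ ≤ ENNReal.ofReal (C ^ 2 * A.toReal) := ENNReal.ofReal_le_ofReal hC2
      _ = ENNReal.ofReal (C ^ 2) * ENNReal.ofReal A.toReal := ENNReal.ofReal_mul (by positivity)
      _ = ENNReal.ofReal (C ^ 2) * A := by rw [ENNReal.ofReal_toReal hA]
  calc (∫⁻ ζ, (‖laplaceT f ζ‖₊ : ℝ≥0∞) ^ (2:ℝ) ∂μ) ^ (1/(2:ℝ))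
      ≤ (ENNReal.ofReal (C ^ 2) * A) ^ (1/(2:ℝ)) := ENNReal.rpow_le_rpow hfinal (by norm_num)
    _ = (ENNReal.ofReal (C ^ 2)) ^ (1/(2:ℝ)) * A ^ (1/(2:ℝ)) :=
        ENNReal.mul_rpow_of_ne_top ENNReal.ofReal_ne_top hA _
    _ = ENNReal.ofReal C * lpwNorm 2 w f := by
        rw [hlpw]
        congr 1
        rw [ENNReal.ofReal_pow hC.le, ← ENNReal.rpow_natCast (ENNReal.ofReal C) 2,
          ← ENNReal.rpow_mul]
        norm_num
end

section
/- Let w be a measurable weight on (0,∞) such that for every z ∈ ℂ₊ the function t ↦ e^{−t z̄}/w(t) belongs to L²_w(0,∞). Suppose that 𝔏(L²_w(0,∞)), equipped with the norm ‖𝔏f‖ := ‖f‖_{L²_w}, is a Banach algebra with respect to pointwise multiplication; that is, for all f, g ∈ L²_w(0,∞) there exists h ∈ L²_w(0,∞) with 𝔏h = (𝔏f)·(𝔏g) on ℂ₊ and ‖h‖_{L²_w} ≤ ‖f‖_{L²_w} ‖g‖_{L²_w}. Let (λ_k)_{k∈ℕ} be a sequence in the open left half-plane, (b_k)_{k∈ℕ}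 a sequence of complex numbers with Σ_{k=1}^∞ |b_k|² < ∞, and μ := Σ_{k=1}^∞ |b_k|² δ_{−λ_k}. Then the Laplace–Carleson embedding 𝔏 : L²_w(0,∞) → L²(ℂ₊, μ) is bounded. -/
open MeasureTheory Set Complex Filter ENNReal

lemma pow_le_aux {x y K : ℝ≥0∞} (hK : K < ⊤) (hy : y < ⊤)
    (h : ∀ n : ℕ, x ^ (n + 1) ≤ K * y ^ (n + 1)) : x ≤ y := by
  by_contra hxy
  push_neg at hxy
  have hx1 : x ≤ K * y := by simpa using h 0
  have hxlt : x < ⊤ := lt_of_le_of_lt hx1 (ENNReal.mul_lt_top hK hy)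
  have hy0 : y ≠ 0 := by
    rintro rfl
    simp at hx1
    simp [hx1] at hxy
  set a := x.toReal
  set b := y.toReal
  set k := K.toReal
  have hb0 : 0 < b := ENNReal.toReal_pos hy0 hy.ne
  have hba : b < a := by
    exact ENNReal.toReal_lt_toReal hy.ne hxlt.ne |>.mpr hxy
  have hr : 1 < a / b := (one_lt_div hb0).mpr hba
  obtain ⟨n, hn⟩ := pow_unbounded_of_one_lt k hr
  have hreal : a ^ (n + 1) ≤ k * b ^ (n + 1) := by
    have := h n
    have h2 : (x ^ (n+1)).toReal ≤ (K * y ^ (n+1)).toReal :=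
      ENNReal.toReal_mono ((ENNReal.mul_lt_top hK (ENNReal.pow_lt_top hy)).ne) this
    simpa [ENNReal.toReal_pow, ENNReal.toReal_mul] using h2
  have hdiv : (a / b) ^ (n + 1) ≤ k := by
    rw [div_pow, div_le_iff₀ (by positivity)]
    exact hreal
  have : (a / b) ^ n ≤ (a / b) ^ (n + 1) :=
    pow_le_pow_right₀ hr.le (Nat.le_succ n)
  linarith

lemma cs_bound (w : ℝ → ℝ) (hw : Measurable w) (hwpos : ∀ t > 0, 0 < w t)
    (z : ℂ) (g : ℝ → ℂ) (hg : Measurable g) :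
    (‖laplaceT g z‖₊ : ℝ≥0∞) ≤ lpwNorm 2 w g *
      lpwNorm 2 w (fun t => Complex.exp (-(t : ℂ) * (starRingEnd ℂ) z) / (w t : ℂ)) := by
  set F : ℝ → ℝ≥0∞ := fun t => ENNReal.ofReal (‖g t‖ * Real.sqrt (w t)) with hF
  set G : ℝ → ℝ≥0∞ := fun t =>
    ENNReal.ofReal (Real.exp (-(t * z.re)) / Real.sqrt (w t)) with hG
  have hFm : Measurable F := by
    exact (hg.norm.mul (hw.sqrt)).ennreal_ofReal
  have hGm : Measurable G := by
    exact ((Real.measurable_exp.comp (measurable_id.mul_const z.re).neg).div hw.sqrt).ennreal_ofReal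
  have step1 : (‖laplaceT g z‖₊ : ℝ≥0∞)
      ≤ ∫⁻ t in Set.Ioi (0:ℝ), ‖g t * Complex.exp (-(t:ℂ) * z)‖₊ :=
    enorm_integral_le_lintegral_enorm _
  have hnorm : ∀ t : ℝ, ‖Complex.exp (-(t:ℂ) * z)‖ = Real.exp (-(t * z.re)) := by
    intro t
    rw [Complex.norm_exp]
    norm_num
  have step2 : ∫⁻ t in Set.Ioi (0:ℝ), (‖g t * Complex.exp (-(t:ℂ) * z)‖₊ : ℝ≥0∞)
      = ∫⁻ t in Set.Ioi (0:ℝ), F t * G t := by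
    apply setLIntegral_congr_fun_ae measurableSet_Ioi
    filter_upwards with t ht
    have hwt : 0 < w t := hwpos t ht
    have hst : 0 < Real.sqrt (w t) := Real.sqrt_pos.mpr hwt
    rw [← enorm_eq_nnnorm, ← ofReal_norm, hF, hG]
    simp only []
    rw [← ENNReal.ofReal_mul (by positivity)]
    congr 1
    rw [norm_mul, hnorm t]
    field_simp
  have holder : ∫⁻ t in Set.Ioi (0:ℝ), F t * G t
      ≤ (∫⁻ t in Set.Ioi (0:ℝ), F t ^ (2:ℝ)) ^ (1/(2:ℝ))
        * (∫⁻ t in Set.Ioi (0:ℝ), G t ^ (2:ℝ)) ^ (1/(2:ℝ)) := by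
    exact ENNReal.lintegral_mul_le_Lp_mul_Lq _ Real.HolderConjugate.two_two
      hFm.aemeasurable hGm.aemeasurable
  have eqF : (∫⁻ t in Set.Ioi (0:ℝ), F t ^ (2:ℝ)) ^ (1/(2:ℝ)) = lpwNorm 2 w g := by
    rw [lpwNorm]
    congr 1
    apply setLIntegral_congr_fun_ae measurableSet_Ioi
    filter_upwards with t ht
    have hwt : 0 < w t := hwpos t ht
    rw [hF]
    simp only []
    rw [← enorm_eq_nnnorm, ← ofReal_norm,
      ENNReal.ofReal_rpow_of_nonneg (by positivity) (by norm_num),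
      ENNReal.ofReal_rpow_of_nonneg (norm_nonneg _) (by norm_num),
      ← ENNReal.ofReal_mul (by positivity)]
    congr 1
    rw [Real.mul_rpow (norm_nonneg _) (Real.sqrt_nonneg _)]
    congr 1
    rw [show (2:ℝ) = ((2:ℕ):ℝ) by norm_num, Real.rpow_natCast, Real.sq_sqrt hwt.le]
  have hkn : ∀ t : ℝ, 0 < t →
      ‖Complex.exp (-(t:ℂ) * (starRingEnd ℂ) z) / ((w t : ℝ) : ℂ)‖
        = Real.exp (-(t * z.re)) / w t := by
    intro t ht
    rw [norm_div, Complex.norm_exp, Complex.norm_real,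
      Real.norm_of_nonneg (hwpos t ht).le]
    norm_num
  have eqG : (∫⁻ t in Set.Ioi (0:ℝ), G t ^ (2:ℝ)) ^ (1/(2:ℝ))
      = lpwNorm 2 w (fun t => Complex.exp (-(t : ℂ) * (starRingEnd ℂ) z) / (w t : ℂ)) := by
    rw [lpwNorm]
    congr 1
    apply setLIntegral_congr_fun_ae measurableSet_Ioi
    filter_upwards with t ht
    have hwt : 0 < w t := hwpos t ht
    have hst : 0 < Real.sqrt (w t) := Real.sqrt_pos.mpr hwt
    rw [hG]
    simp only []
    rw [← enorm_eq_nnnorm, ← ofReal_norm, hkn t ht,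
      ENNReal.ofReal_rpow_of_nonneg (by positivity) (by norm_num),
      ENNReal.ofReal_rpow_of_nonneg (by positivity) (by norm_num),
      ← ENNReal.ofReal_mul (by positivity)]
    congr 1
    rw [show (2:ℝ) = ((2:ℕ):ℝ) by norm_num, Real.rpow_natCast, Real.rpow_natCast]
    have h2 : Real.sqrt (w t) ^ 2 = w t := Real.sq_sqrt hwt.le
    field_simp
    nlinarith [Real.exp_pos (-(t * z.re)), sq_nonneg (Real.exp (-(t * z.re)))]
  calc (‖laplaceT g z‖₊ : ℝ≥0∞) ≤ _ := step1
    _ = _ := step2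
    _ ≤ _ := holder
    _ = _ := by rw [eqF, eqG]

/-- if `𝔏(L²_w(0,∞))` is a Banach algebra under pointwise
multiplication and `(b_k) ∈ ℓ²`, then the Laplace–Carleson embedding
`𝔏 : L²_w(0,∞) → L²(ℂ₊, μ)` with `μ = Σ_k |b_k|² δ_{-λ_k}` is bounded. -/
theorem laplace_carleson_bounded_of_banach_algebra
    (w : ℝ → ℝ) (hw : Measurable w) (hwpos : ∀ t > 0, 0 < w t)
    (hker : ∀ z : ℂ, 0 < z.re →
      lpwNorm 2 w (fun t => Complex.exp (-(t : ℂ) * (starRingEnd ℂ) z) / (w t : ℂ)) < ⊤)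
    (halg : ∀ f g : ℝ → ℂ, Measurable f → Measurable g →
      lpwNorm 2 w f < ⊤ → lpwNorm 2 w g < ⊤ →
      ∃ h : ℝ → ℂ, Measurable h ∧ lpwNorm 2 w h < ⊤ ∧
        (∀ z : ℂ, 0 < z.re → laplaceT h z = laplaceT f z * laplaceT g z) ∧
        lpwNorm 2 w h ≤ lpwNorm 2 w f * lpwNorm 2 w g)
    (lam : ℕ → ℂ) (hlam : ∀ k, (lam k).re < 0) (b : ℕ → ℂ)
    (hb : Summable fun k : ℕ => ‖b k‖ ^ 2)
    (μ : Measure ℂ)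
    (hμ : μ = Measure.sum fun k : ℕ =>
      (ENNReal.ofReal (‖b k‖ ^ 2)) • Measure.dirac (-(lam k))) :
    lcBounded 2 2 w μ := by
  classical
  set S : ℝ≥0∞ := ∑' k : ℕ, ENNReal.ofReal (‖b k‖ ^ 2) with hSdef
  have hSfin : S < ⊤ := by
    rw [hSdef, ← ENNReal.ofReal_tsum_of_nonneg (fun k => by positivity) hb]
    exact ENNReal.ofReal_lt_top
  refine ⟨Real.sqrt S.toReal + 1, by positivity, ?_⟩
  intro f hf
  have hCpos : (0:ℝ) < Real.sqrt S.toReal + 1 := by positivity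
  have hC0 : ENNReal.ofReal (Real.sqrt S.toReal + 1) ≠ 0 := by
    simp [ENNReal.ofReal_eq_zero, not_le, hCpos]
  by_cases hfin : lpwNorm 2 w f < ⊤
  swap
  · push_neg at hfin
    rw [top_le_iff] at hfin
    rw [hfin, ENNReal.mul_top hC0]
    exact le_top
  -- iterated powers via the Banach algebra property
  have iter : ∀ n : ℕ, ∃ g : ℝ → ℂ, Measurable g ∧ lpwNorm 2 w g < ⊤ ∧
      (∀ z : ℂ, 0 < z.re → laplaceT g z = (laplaceT f z) ^ (n+1)) ∧
      lpwNorm 2 w g ≤ (lpwNorm 2 w f) ^ (n+1) := by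
    intro n
    induction n with
    | zero => exact ⟨f, hf, hfin, fun z _ => (pow_one _).symm, by simp⟩
    | succ n ih =>
      obtain ⟨g, hgm, hgfin, hgl, hgn⟩ := ih
      obtain ⟨h, hhm, hhfin, hhl, hhn⟩ := halg g f hgm hf hgfin hfin
      refine ⟨h, hhm, hhfin, fun z hz => by rw [hhl z hz, hgl z hz]; ring, ?_⟩
      calc lpwNorm 2 w h ≤ lpwNorm 2 w g * lpwNorm 2 w f := hhn
        _ ≤ (lpwNorm 2 w f) ^ (n+1) * lpwNorm 2 w f := mul_le_mul_left hgn _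
        _ = (lpwNorm 2 w f) ^ (n+2) := (pow_succ _ _).symm
  -- pointwise evaluation bound on the right half-plane
  have hpt : ∀ z : ℂ, 0 < z.re → (‖laplaceT f z‖₊ : ℝ≥0∞) ≤ lpwNorm 2 w f := by
    intro z hz
    refine pow_le_aux (hker z hz) hfin ?_
    intro n
    obtain ⟨g, hgm, hgfin, hgl, hgn⟩ := iter n
    calc (‖laplaceT f z‖₊ : ℝ≥0∞) ^ (n+1) = (‖laplaceT g z‖₊ : ℝ≥0∞) := by
          rw [hgl z hz]; push_cast [nnnorm_pow]; ring
      _ ≤ lpwNorm 2 w g *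
            lpwNorm 2 w (fun t => Complex.exp (-(t : ℂ) * (starRingEnd ℂ) z) / (w t : ℂ)) :=
          cs_bound w hw hwpos z g hgm
      _ ≤ lpwNorm 2 w (fun t => Complex.exp (-(t : ℂ) * (starRingEnd ℂ) z) / (w t : ℂ))
            * (lpwNorm 2 w f) ^ (n+1) := by
          rw [mul_comm]; exact mul_le_mul_right hgn _
  -- compute the integral against μ
  have hint : ∫⁻ z, (‖laplaceT f z‖₊ : ℝ≥0∞) ^ (2:ℝ) ∂μ
      = ∑' k : ℕ, ENNReal.ofReal (‖b k‖ ^ 2) * (‖laplaceT f (-(lam k))‖₊ : ℝ≥0∞) ^ (2:ℝ) := by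
    rw [hμ, lintegral_sum_measure]
    congr 1
    funext k
    rw [lintegral_smul_measure, lintegral_dirac, smul_eq_mul]
  have hbound : ∫⁻ z, (‖laplaceT f z‖₊ : ℝ≥0∞) ^ (2:ℝ) ∂μ ≤ S * (lpwNorm 2 w f) ^ (2:ℝ) := by
    rw [hint, hSdef, ← ENNReal.tsum_mul_right]
    refine ENNReal.tsum_le_tsum fun k => ?_
    refine mul_le_mul_right ?_ _
    refine ENNReal.rpow_le_rpow ?_ (by norm_num)
    refine hpt (-(lam k)) ?_
    simpa using neg_pos.mpr (hlam k)
  calc (∫⁻ z, (‖laplaceT f z‖₊ : ℝ≥0∞) ^ (2:ℝ) ∂μ) ^ (1/(2:ℝ))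
      ≤ (S * (lpwNorm 2 w f) ^ (2:ℝ)) ^ (1/(2:ℝ)) :=
        ENNReal.rpow_le_rpow hbound (by norm_num)
    _ = S ^ (1/(2:ℝ)) * lpwNorm 2 w f := by
        rw [ENNReal.mul_rpow_of_nonneg _ _ (by norm_num), ← ENNReal.rpow_mul]
        norm_num
    _ ≤ ENNReal.ofReal (Real.sqrt S.toReal + 1) * lpwNorm 2 w f := by
        refine mul_le_mul_left ?_ _
        have h1 : S = ENNReal.ofReal S.toReal := (ENNReal.ofReal_toReal hSfin.ne).symm
        calc S ^ (1/(2:ℝ)) = ENNReal.ofReal (S.toReal ^ (1/(2:ℝ))) := by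
              rw [← ENNReal.ofReal_rpow_of_nonneg ENNReal.toReal_nonneg (by norm_num : (0:ℝ) ≤ 1/2), ← h1]
          _ = ENNReal.ofReal (Real.sqrt S.toReal) := by
              rw [Real.sqrt_eq_rpow]
          _ ≤ ENNReal.ofReal (Real.sqrt S.toReal + 1) :=
              ENNReal.ofReal_le_ofReal (by linarith)
end

section
/- Let ν̃ be a positive regular Borel measure on [0,∞) satisfying the Δ₂-condition with constant R := sup_{r>0} ν̃[0,2r)/ν̃[0,r) < ∞, and let ν := ν̃ ⊗ λ on [0,∞) × ℝ, where λ is Lebesgue measure on ℝ. Let s > 0 satisfy 2^{s−1} > R. Then for every a ∈ ℂ₊, ∫ |z + ā|^{−s} dν(z) ≤ (2/Re(a))^s · ν(closure of Q(a)) · Σ_{k=0}^∞ (R/2^{s−1})^k; in particular there is a constant C depending only on R and s such that ∫ |z + ā|^{−s} dν(z) ≤ C ν(closure of Q(a)) / (Re(a))^s. -/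
open MeasureTheory Set Complex Filter ENNReal

/-- The Carleson square `Q(a)` centred at `a ∈ ℂ₊`. -/
def carlesonQ (a : ℂ) : Set ℂ :=
  {z : ℂ | 0 ≤ z.re ∧ z.re < 2 * a.re ∧ |z.im - a.im| ≤ a.re}

/-- The measure `ν = ν̃ ⊗ λ` on the closed right half-plane `[0,∞) × ℝ ≅ ℂ`,
where `λ` is Lebesgue measure. -/
noncomputable def prodMeasC (ν' : Measure ℝ) : Measure ℂ :=
  (ν'.prod volume).map Complex.measurableEquivRealProd.symm

lemma real_calc (r R s : ℝ) (hr : 0 < r) (k : ℕ) :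
    ((2:ℝ)^k * r / 2) ^ (-s) * (2*R)^k = (2/r)^s * (R / 2^(s-1))^k := by
  have h2k : (0:ℝ) < 2^k := by positivity
  have hrw : ((2:ℝ)^k * r / 2) ^ (-s) = ((2:ℝ)^k)^(-s) * (r/2)^(-s) := by
    rw [mul_div_assoc, Real.mul_rpow h2k.le (by positivity)]
  have h1 : ((r:ℝ)/2)^(-s) = (2/r)^s := by
    rw [Real.rpow_neg (by positivity), ← Real.inv_rpow (by positivity), inv_div]
  have h2 : ((2:ℝ)^k)^(-s) = ((2:ℝ)^(-s))^k := by
    rw [← Real.rpow_natCast ((2:ℝ)^(-s)) k, ← Real.rpow_natCast (2:ℝ) k,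
      ← Real.rpow_mul (by norm_num), ← Real.rpow_mul (by norm_num), mul_comm]
  have h3 : (2:ℝ)^(-s) * (2*R) = R / 2^(s-1) := by
    have ha : (2:ℝ)^(-s) * 2 = 2^(1-s) := by
      nth_rewrite 2 [show (2:ℝ) = 2^(1:ℝ) by rw [Real.rpow_one]]
      rw [← Real.rpow_add (by norm_num)]; ring_nf
    have h4 : (2:ℝ)^(1-s) = ((2:ℝ)^(s-1))⁻¹ := by
      rw [← Real.rpow_neg (by norm_num : (0:ℝ) ≤ 2) (s-1)]; congr 1; ring
    calc (2:ℝ)^(-s) * (2*R) = ((2:ℝ)^(-s) * 2) * R := by ring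
    _ = ((2:ℝ)^(s-1))⁻¹ * R := by rw [ha, h4]
    _ = R / 2^(s-1) := by ring
  rw [hrw, h1, h2, ← h3, mul_pow, mul_pow]
  ring

lemma preimage_box (b c m : ℝ) :
    Complex.measurableEquivRealProd.symm ⁻¹' {z : ℂ | 0 ≤ z.re ∧ z.re < b ∧ |z.im - m| ≤ c}
      = (Set.Ico 0 b) ×ˢ (Set.Icc (m - c) (m + c)) := by
  ext ⟨x, y⟩
  simp [Complex.measurableEquivRealProd, abs_le]
  constructor
  · rintro ⟨h1, h2, h3, h4⟩; exact ⟨⟨h1, h2⟩, by linarith, by linarith⟩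
  · rintro ⟨⟨h1, h2⟩, h3, h4⟩; exact ⟨h1, h2, by linarith, by linarith⟩

lemma prodMeasC_box (ν' : Measure ℝ) (b c m : ℝ) :
    prodMeasC ν' {z : ℂ | 0 ≤ z.re ∧ z.re < b ∧ |z.im - m| ≤ c}
      = ν' (Set.Ico 0 b) * ENNReal.ofReal (2 * c) := by
  rw [prodMeasC, MeasurableEquiv.map_apply, preimage_box, Measure.prod_prod,
    Real.volume_Icc]
  congr 1
  congr 1
  ring


/-- for `ν̃` satisfying `Δ₂` with constant `R`, `ν = ν̃ ⊗ λ`, and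
`s > 0` with `2^{s-1} > R`, one has
`∫ |z + ā|^{-s} dν(z) ≤ (2/Re a)^s ν(closure Q(a)) Σ_k (R/2^{s-1})^k`;
in particular `∫ |z + ā|^{-s} dν(z) ≤ C ν(closure Q(a)) / (Re a)^s` for a constant
`C` depending only on `R` and `s`. -/
theorem lintegral_inv_rpow_le_carleson_square
    (ν' : Measure ℝ) (hreg : ν'.Regular) (hsupp : ν' {x : ℝ | x < 0} = 0)
    (R : ℝ) (hR0 : 0 ≤ R)
    (hΔ₂ : ∀ r > 0, ν' (Set.Ico 0 (2 * r)) ≤ ENNReal.ofReal R * ν' (Set.Ico 0 r))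
    (s : ℝ) (hs : 0 < s) (hRs : R < 2 ^ (s - 1)) :
    (∀ a : ℂ, 0 < a.re →
      ∫⁻ z, (‖z + (starRingEnd ℂ) a‖₊ : ℝ≥0∞) ^ (-s) ∂(prodMeasC ν') ≤
        ENNReal.ofReal ((2 / a.re) ^ s * ∑' k : ℕ, (R / 2 ^ (s - 1)) ^ k) *
          prodMeasC ν' (closure (carlesonQ a))) ∧
    ∃ C > 0, ∀ a : ℂ, 0 < a.re →
      ∫⁻ z, (‖z + (starRingEnd ℂ) a‖₊ : ℝ≥0∞) ^ (-s) ∂(prodMeasC ν') ≤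
        ENNReal.ofReal C * prodMeasC ν' (closure (carlesonQ a)) /
          ENNReal.ofReal (a.re ^ s) := by
  have h2s : (0:ℝ) < 2 ^ (s-1) := Real.rpow_pos_of_pos two_pos _
  set ρ : ℝ := R / 2 ^ (s-1) with hρdef
  have hρ0 : 0 ≤ ρ := div_nonneg hR0 h2s.le
  have hρ1 : ρ < 1 := (div_lt_one h2s).2 hRs
  have hTsum : Summable (fun k : ℕ => ρ ^ k) := summable_geometric_of_lt_one hρ0 hρ1
  have hTpos : 0 < ∑' k : ℕ, ρ ^ k := by
    rw [tsum_geometric_of_lt_one hρ0 hρ1]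
    have : 0 < 1 - ρ := by linarith
    positivity
  have part1 : ∀ a : ℂ, 0 < a.re →
      ∫⁻ z, (‖z + (starRingEnd ℂ) a‖₊ : ℝ≥0∞) ^ (-s) ∂(prodMeasC ν') ≤
        ENNReal.ofReal ((2 / a.re) ^ s * ∑' k : ℕ, ρ ^ k) *
          prodMeasC ν' (closure (carlesonQ a)) := by
    intro a ha
    set r := a.re with hrdef
    set f : ℂ → ℝ≥0∞ := fun z => (‖z + (starRingEnd ℂ) a‖₊ : ℝ≥0∞) ^ (-s) with hfdef
    set C : ℕ → Set ℂ :=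
      fun k => {z : ℂ | 0 ≤ z.re ∧ z.re < 2^(k+1) * r ∧ |z.im - a.im| ≤ 2^k * r} with hCdef
    have hCmeas : ∀ k, MeasurableSet (C k) := by
      intro k
      apply MeasurableSet.inter (measurableSet_le measurable_const Complex.measurable_re)
      apply MeasurableSet.inter (measurableSet_lt Complex.measurable_re measurable_const)
      exact measurableSet_le ((Complex.measurable_im.sub measurable_const).abs) measurable_const
    have hCmono : Monotone C := by
      apply monotone_nat_of_le_succ
      intro k z hz
      obtain ⟨h1, h2, h3⟩ := hz
      have hp : (2:ℝ)^(k+1) ≤ 2^(k+2) := by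
        apply pow_le_pow_right₀ (by norm_num); omega
      have hp2 : (2:ℝ)^k ≤ 2^(k+1) := by
        apply pow_le_pow_right₀ (by norm_num); omega
      exact ⟨h1, lt_of_lt_of_le h2 (by nlinarith), le_trans h3 (by nlinarith)⟩
    have hνC : ∀ k, prodMeasC ν' (C k)
        = ν' (Set.Ico 0 (2^(k+1) * r)) * ENNReal.ofReal (2^(k+1) * r) := by
      intro k
      rw [hCdef]
      rw [prodMeasC_box ν' (2^(k+1) * r) (2^k * r) a.im]
      congr 2
      ring
    have hΔ : ∀ k, ν' (Set.Ico 0 (2^(k+1) * r)) ≤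
        ENNReal.ofReal R ^ k * ν' (Set.Ico 0 (2 * r)) := by
      intro k
      induction k with
      | zero => simp [pow_one]
      | succ k ih =>
        have hpos : (0:ℝ) < 2^(k+1) * r := by positivity
        have step := hΔ₂ (2^(k+1) * r) hpos
        have heq : (2:ℝ) * (2^(k+1) * r) = 2^(k+2) * r := by ring
        rw [heq] at step
        calc ν' (Set.Ico 0 (2^(k+2) * r)) ≤ ENNReal.ofReal R * ν' (Set.Ico 0 (2^(k+1) * r)) := step
        _ ≤ ENNReal.ofReal R * (ENNReal.ofReal R ^ k * ν' (Set.Ico 0 (2 * r))) :=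
            mul_le_mul_right ih _
        _ = ENNReal.ofReal R ^ (k+1) * ν' (Set.Ico 0 (2 * r)) := by ring
    have hC0 : C 0 = carlesonQ a := by
      rw [hCdef]; ext z; simp [carlesonQ, hrdef]
    have hU : MeasurableSet {z : ℂ | 0 ≤ z.re} :=
      measurableSet_le measurable_const Complex.measurable_re
    have hUnion : {z : ℂ | 0 ≤ z.re} = ⋃ k, C k := by
      ext z
      simp only [Set.mem_iUnion, Set.mem_setOf_eq, hCdef]
      constructor
      · intro hz
        obtain ⟨k, hk⟩ := pow_unbounded_of_one_lt (max z.re |z.im - a.im| / r) (one_lt_two (α := ℝ))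
        rw [div_lt_iff₀ ha] at hk
        refine ⟨k, hz, ?_, ?_⟩
        · calc z.re ≤ max z.re |z.im - a.im| := le_max_left _ _
          _ < 2^k * r := hk
          _ ≤ 2^(k+1) * r := by
              have : (2:ℝ)^k ≤ 2^(k+1) := by apply pow_le_pow_right₀ (by norm_num); omega
              nlinarith
        · calc |z.im - a.im| ≤ max z.re |z.im - a.im| := le_max_right _ _
          _ ≤ 2^k * r := hk.le
      · rintro ⟨k, hk, -, -⟩; exact hk
    have hcompl : prodMeasC ν' {z : ℂ | 0 ≤ z.re}ᶜ = 0 := by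
      have h1 : {z : ℂ | 0 ≤ z.re}ᶜ = {z : ℂ | z.re < 0} := by
        ext z; simp [not_le]
      have h2 : Complex.measurableEquivRealProd.symm ⁻¹' {z : ℂ | z.re < 0}
          = {x : ℝ | x < 0} ×ˢ (Set.univ : Set ℝ) := by
        ext ⟨x, y⟩; simp [Complex.measurableEquivRealProd]
      rw [h1, prodMeasC, MeasurableEquiv.map_apply, h2, Measure.prod_prod, hsupp, zero_mul]
    -- norm lower bounds
    have hre : ∀ z : ℂ, z.re + r ≤ ‖z + (starRingEnd ℂ) a‖ := by
      intro z
      have h := Complex.abs_re_le_norm (z + (starRingEnd ℂ) a)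
      have : (z + (starRingEnd ℂ) a).re = z.re + r := by
        simp [Complex.add_re, Complex.conj_re, hrdef]
      rw [this] at h
      exact le_trans (le_abs_self _) h
    have him : ∀ z : ℂ, |z.im - a.im| ≤ ‖z + (starRingEnd ℂ) a‖ := by
      intro z
      have h := Complex.abs_im_le_norm (z + (starRingEnd ℂ) a)
      have : (z + (starRingEnd ℂ) a).im = z.im - a.im := by
        simp [Complex.add_im, Complex.conj_im]
        ring
      rw [this] at h
      exact h
    have hfb : ∀ k, ∀ z ∈ disjointed C k,
        f z ≤ ENNReal.ofReal (((2:ℝ)^k * r / 2) ^ (-s)) := by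
      intro k z hz
      have hb : (0:ℝ) < 2^k * r / 2 := by positivity
      have hnorm : (2:ℝ)^k * r / 2 ≤ ‖z + (starRingEnd ℂ) a‖ := by
        match k with
        | 0 =>
          rw [disjointed_zero] at hz
          obtain ⟨h1, -, -⟩ := hz
          have := hre z
          simp only [pow_zero, one_mul]
          linarith
        | (k+1) =>
          rw [hCmono.disjointed_add_one] at hz
          obtain ⟨⟨h1, h2, h3⟩, hnot⟩ := hz
          by_cases hcase : |z.im - a.im| ≤ 2^k * r
          · -- then must fail the re bound of C k
            have hre2 : ¬ (z.re < 2^(k+1) * r) := by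
              intro hcon
              exact hnot ⟨h1, hcon, hcase⟩
            push_neg at hre2
            have := hre z
            have hp : (0:ℝ) < 2^(k+1) * r := by positivity
            linarith
          · push_neg at hcase
            have := him z
            have : (2:ℝ)^k * r ≤ ‖z + (starRingEnd ℂ) a‖ := by linarith
            have heq : (2:ℝ)^(k+1) * r / 2 = 2^k * r := by ring
            linarith [heq ▸ this]
      calc f z ≤ (ENNReal.ofReal ((2:ℝ)^k * r / 2)) ^ (-s) := by
            rw [hfdef]
            simp only
            rw [ENNReal.rpow_neg, ENNReal.rpow_neg]
            apply ENNReal.inv_le_inv.2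
            apply ENNReal.rpow_le_rpow _ hs.le
            rw [← ENNReal.ofReal_coe_nnreal, coe_nnnorm]
            exact ENNReal.ofReal_le_ofReal hnorm
      _ = ENNReal.ofReal (((2:ℝ)^k * r / 2) ^ (-s)) := ENNReal.ofReal_rpow_of_pos hb
    -- the main chain
    have hA : ν' (Set.Ico 0 (2 * r)) * ENNReal.ofReal (2 * r)
        ≤ prodMeasC ν' (closure (carlesonQ a)) := by
      have : ν' (Set.Ico 0 (2 * r)) * ENNReal.ofReal (2 * r) = prodMeasC ν' (C 0) := by
        rw [hνC 0]; norm_num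
      rw [this, hC0]
      exact measure_mono subset_closure
    have hterm : ∀ k, ∫⁻ z in disjointed C k, f z ∂(prodMeasC ν') ≤
        ENNReal.ofReal ((2/r)^s) * ENNReal.ofReal (ρ^k) *
          prodMeasC ν' (closure (carlesonQ a)) := by
      intro k
      calc ∫⁻ z in disjointed C k, f z ∂(prodMeasC ν')
          ≤ ∫⁻ _ in disjointed C k, ENNReal.ofReal (((2:ℝ)^k * r / 2) ^ (-s)) ∂(prodMeasC ν') :=
            setLIntegral_mono measurable_const (hfb k)
        _ = ENNReal.ofReal (((2:ℝ)^k * r / 2) ^ (-s)) * prodMeasC ν' (disjointed C k) :=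
            setLIntegral_const _ _
        _ ≤ ENNReal.ofReal (((2:ℝ)^k * r / 2) ^ (-s)) * prodMeasC ν' (C k) :=
            mul_le_mul_right (measure_mono (disjointed_le C k)) _
        _ = ENNReal.ofReal (((2:ℝ)^k * r / 2) ^ (-s)) *
              (ν' (Set.Ico 0 (2^(k+1) * r)) * ENNReal.ofReal (2^(k+1) * r)) := by rw [hνC k]
        _ ≤ ENNReal.ofReal (((2:ℝ)^k * r / 2) ^ (-s)) *
              ((ENNReal.ofReal R ^ k * ν' (Set.Ico 0 (2 * r))) * ENNReal.ofReal (2^(k+1) * r)) := by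
            gcongr
            exact hΔ k
        _ = (ENNReal.ofReal (((2:ℝ)^k * r / 2) ^ (-s)) * ENNReal.ofReal R ^ k *
              ENNReal.ofReal ((2:ℝ)^k)) * (ν' (Set.Ico 0 (2 * r)) * ENNReal.ofReal (2 * r)) := by
            have : ENNReal.ofReal ((2:ℝ)^(k+1) * r) =
                ENNReal.ofReal ((2:ℝ)^k) * ENNReal.ofReal (2 * r) := by
              rw [← ENNReal.ofReal_mul (by positivity)]
              congr 1; ring
            rw [this]; ring
        _ = ENNReal.ofReal ((2/r)^s) * ENNReal.ofReal (ρ^k) *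
              (ν' (Set.Ico 0 (2 * r)) * ENNReal.ofReal (2 * r)) := by
            congr 1
            rw [← ENNReal.ofReal_pow hR0, ← ENNReal.ofReal_mul (by positivity),
              ← ENNReal.ofReal_mul (by positivity),
              ← ENNReal.ofReal_mul (by positivity)]
            congr 1
            have hrc := real_calc r R s ha k
            rw [hρdef, ← hrc, mul_pow]
            ring
        _ ≤ ENNReal.ofReal ((2/r)^s) * ENNReal.ofReal (ρ^k) *
              prodMeasC ν' (closure (carlesonQ a)) := mul_le_mul_right hA _
    calc ∫⁻ z, f z ∂(prodMeasC ν')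
        = ∫⁻ z in {z : ℂ | 0 ≤ z.re}, f z ∂(prodMeasC ν')
          + ∫⁻ z in {z : ℂ | 0 ≤ z.re}ᶜ, f z ∂(prodMeasC ν') :=
          (lintegral_add_compl f hU).symm
      _ = ∫⁻ z in ⋃ k, disjointed C k, f z ∂(prodMeasC ν') := by
          rw [setLIntegral_measure_zero _ _ hcompl, add_zero, hUnion, iUnion_disjointed]
      _ ≤ ∑' k, ∫⁻ z in disjointed C k, f z ∂(prodMeasC ν') := lintegral_iUnion_le _ _
      _ ≤ ∑' k, ENNReal.ofReal ((2/r)^s) * ENNReal.ofReal (ρ^k) *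
            prodMeasC ν' (closure (carlesonQ a)) := ENNReal.tsum_le_tsum hterm
      _ = ENNReal.ofReal ((2/r)^s * ∑' k : ℕ, ρ^k) *
            prodMeasC ν' (closure (carlesonQ a)) := by
          rw [ENNReal.ofReal_mul (by positivity),
            ENNReal.ofReal_tsum_of_nonneg (fun k => by positivity) hTsum]
          rw [ENNReal.tsum_mul_right, ENNReal.tsum_mul_left]
  refine ⟨part1, (2:ℝ)^s * ∑' k : ℕ, ρ^k, by positivity, ?_⟩
  intro a ha
  refine le_trans (part1 a ha) ?_
  have heq : (2/a.re)^s * ∑' k : ℕ, ρ^k = ((2:ℝ)^s * ∑' k : ℕ, ρ^k) / a.re^s := by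
    rw [Real.div_rpow (by norm_num) ha.le]; ring
  rw [heq, ENNReal.ofReal_div_of_pos (Real.rpow_pos_of_pos ha s), div_eq_mul_inv,
    div_eq_mul_inv, mul_right_comm]
end

section
/- Let 1 ≤ p, q < ∞, let 0 ≤ m < ∞, and for 0 ≤ n ≤ m let ν̃_n be positive regular Borel measures on [0,∞) each satisfying the Δ₂-condition, with ν_n := ν̃_n ⊗ λ. Let μ be a positive Borel measure on ℂ₊. If the embedding A^p(ℂ₊, (ν_n)_{n=0}^m) ↪ L^q(ℂ₊, μ) is bounded, i.e. there exists C′ > 0 with (∫_{ℂ₊} |F|^q dμ)^{1/q} ≤ C′ ‖F‖_{A^p(ℂ₊,(ν_n)_{n=0}^m)} for all F ∈ A^p(ℂ₊, (ν_n)_{n=0}^m), then there exists a constant C > 0 such that for every a ∈ ℂ₊, μ(Q(a)) ≤ C [ Σ_{n=0}^m ν_n(closure of Q(a)) / (Re(a))^{np} ]^{q/p}. -/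
open MeasureTheory Set Complex Filter ENNReal

/-- The `p`-th power of the Zen space norm `‖F‖_{A^p_ν}^p = sup_{ε>0} ∫ |F(z+ε)|^p dν`. -/
noncomputable def zenNormPow (p : ℝ) (ν : Measure ℂ) (F : ℂ → ℂ) : ℝ≥0∞ :=
  ⨆ (ε : ℝ) (_ : 0 < ε), ∫⁻ z, (‖F (z + (ε : ℂ))‖₊ : ℝ≥0∞) ^ p ∂ν

/-- The `p`-th power of the norm of `A^p(ℂ₊, (ν_n)_{n=0}^m)`:
`‖F‖^p = Σ_{n=0}^m ‖F^{(n)}‖_{A^p_{ν_n}}^p`. -/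
noncomputable def apNormPow (p : ℝ) (m : ℕ) (ν : ℕ → Measure ℂ) (F : ℂ → ℂ) : ℝ≥0∞ :=
  ∑ n ∈ Finset.range (m + 1), zenNormPow p (ν n) (iteratedDeriv n F)

set_option maxHeartbeats 1000000 in
lemma iterF (b : ℂ) (M n : ℕ) :
    iteratedDeriv n (fun z : ℂ => (z + b) ^ (-(M:ℤ))) =
      fun z => (∏ i ∈ Finset.range n, ((-(M:ℤ) : ℂ) - i)) * (z + b) ^ (-(M:ℤ) - n) := by
  have h := iteratedDeriv_comp_add_const n (fun w : ℂ => w ^ (-(M:ℤ))) b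
  beta_reduce at h
  rw [h]
  funext z
  rw [iteratedDeriv_eq_iterate, iter_deriv_zpow]; push_cast; ring_nf

noncomputable def cnC (M n : ℕ) : ℝ := ‖∏ i ∈ Finset.range n, ((-(M:ℤ) : ℂ) - (i:ℂ))‖

lemma cnC_nonneg (M n : ℕ) : 0 ≤ cnC M n := norm_nonneg _

lemma normIterF (b : ℂ) (M n : ℕ) (z : ℂ) :
    ‖iteratedDeriv n (fun z : ℂ => (z + b) ^ (-(M:ℤ))) z‖ =
      cnC M n * (‖z + b‖ ^ (M + n))⁻¹ := by
  rw [iterF, norm_mul, norm_zpow]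
  congr 1
  rw [show -(M:ℤ) - n = -((M+n : ℕ) : ℤ) by push_cast; ring, zpow_neg, zpow_natCast]

lemma prodMeasC_rect (ν' : Measure ℝ) (s t : Set ℝ)
    (hs : MeasurableSet s) (ht : MeasurableSet t) :
    prodMeasC ν' {z : ℂ | z.re ∈ s ∧ z.im ∈ t} = ν' s * volume t := by
  rw [prodMeasC, MeasurableEquiv.map_apply]
  have : ⇑Complex.measurableEquivRealProd.symm ⁻¹' {z : ℂ | z.re ∈ s ∧ z.im ∈ t} = s ×ˢ t := by
    ext ⟨x, y⟩
    simp [Complex.measurableEquivRealProd, Complex.equivRealProd]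
  rw [this, Measure.prod_prod]

lemma zen_eps_bound (p : ℝ) (hp : 1 ≤ p) (ν' : Measure ℝ)
    (hsupp : ν' {x : ℝ | x < 0} = 0)
    (R : ℝ) (hR1 : 1 ≤ R)
    (hdbl : ∀ s > 0, ν' (Set.Ico 0 (2*s)) ≤ ENNReal.ofReal R * ν' (Set.Ico 0 s))
    (M n : ℕ) (hM : R * (2:ℝ) ^ ((1:ℝ)-(M:ℝ)) ≤ 1/2)
    (a : ℂ) (ha : 0 < a.re) (ε : ℝ) (hε : 0 < ε) :
    ∫⁻ z, (‖iteratedDeriv n (fun w : ℂ => (w + (starRingEnd ℂ) a) ^ (-(M:ℤ))) (z + (ε:ℂ))‖₊ : ℝ≥0∞) ^ p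
        ∂(prodMeasC ν')
      ≤ ENNReal.ofReal (8 * (cnC M n * 2^(M+n))^p * a.re ^ ((1:ℝ) - ((M+n : ℕ):ℝ) * p))
          * ν' (Set.Ico 0 (2*a.re)) := by
  have hp0 : (0:ℝ) < p := lt_of_lt_of_le one_pos hp
  set r : ℝ := a.re with hrdef
  have hr0 : 0 < r := ha
  set s : ℝ := ((M+n : ℕ) : ℝ) * p with hsdef
  have hMs : (M:ℝ) ≤ s := by
    rw [hsdef]; push_cast
    nlinarith [(Nat.cast_nonneg n : (0:ℝ) ≤ n), (Nat.cast_nonneg M : (0:ℝ) ≤ M), hp]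
  set γ : ℝ := (cnC M n * 2^(M+n))^p with hγdef
  have hcn2 : (0:ℝ) ≤ cnC M n * 2^(M+n) := mul_nonneg (cnC_nonneg M n) (by positivity)
  have hγ0 : 0 ≤ γ := Real.rpow_nonneg hcn2 _
  set F : ℂ → ℂ := fun w : ℂ => (w + (starRingEnd ℂ) a) ^ (-(M:ℤ)) with hFdef
  set g : ℂ → ℝ≥0∞ := fun z => (‖iteratedDeriv n F (z + (ε:ℂ))‖₊ : ℝ≥0∞) ^ p with hgdef
  set t : ℂ → ℝ := fun z => z.re + r + |z.im - a.im| with htdef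
  set E : ℕ → Set ℂ := fun k => {z : ℂ | 0 ≤ z.re ∧ (2:ℝ)^k * r ≤ t z ∧ t z < 2^(k+1) * r}
    with hEdef
  set V : ℝ≥0∞ := ν' (Set.Ico 0 (2*r)) with hVdef
  -- pointwise bound on E k
  have key : ∀ k : ℕ, ∀ z ∈ E k, g z ≤ ENNReal.ofReal (γ * ((2:ℝ)^k * r) ^ (-s)) := by
    intro k z hz
    obtain ⟨hz0, htz, -⟩ := hz
    set w : ℂ := z + (ε:ℂ) + (starRingEnd ℂ) a with hwdef
    have hre : w.re = z.re + ε + r := by simp [hwdef, hrdef]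
    have him : w.im = z.im - a.im := by simp [hwdef, sub_eq_add_neg]
    have hub : (2:ℝ)^k * r / 2 ≤ ‖w‖ := by
      have h1 : w.re ≤ ‖w‖ := Complex.re_le_norm w
      have h2 : |w.im| ≤ ‖w‖ := Complex.abs_im_le_norm w
      rw [hre] at h1; rw [him] at h2
      have htle : t z ≤ 2 * ‖w‖ := by
        simp only [htdef]; linarith
      linarith
    have hu0 : (0:ℝ) < (2:ℝ)^k * r := by positivity
    have hnorm : ‖iteratedDeriv n F (z + (ε:ℂ))‖ = cnC M n * (‖w‖ ^ (M + n))⁻¹ := by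
      have := normIterF ((starRingEnd ℂ) a) M n (z + (ε:ℂ))
      rw [hFdef, this, hwdef]
    have hmono : (‖w‖ ^ (M + n))⁻¹ ≤ (((2:ℝ)^k * r / 2) ^ (M+n))⁻¹ := by
      apply inv_anti₀ (by positivity)
      exact pow_le_pow_left₀ (by positivity) hub _
    have hnle : ‖iteratedDeriv n F (z + (ε:ℂ))‖ ≤ cnC M n * (((2:ℝ)^k * r / 2) ^ (M+n))⁻¹ := by
      rw [hnorm]
      exact mul_le_mul_of_nonneg_left hmono (cnC_nonneg M n)
    have hbeq : (cnC M n * (((2:ℝ)^k * r / 2) ^ (M+n))⁻¹) ^ p = γ * ((2:ℝ)^k * r) ^ (-s) := by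
      have h1 : (((2:ℝ)^k * r / 2) ^ (M+n))⁻¹ = 2^(M+n) * (((2:ℝ)^k * r) ^ (M+n))⁻¹ := by
        rw [div_pow]
        rw [inv_div]
        ring
      rw [h1, ← mul_assoc, Real.mul_rpow hcn2 (by positivity), hγdef]
      congr 1
      rw [← Real.rpow_natCast ((2:ℝ)^k * r) (M+n), ← Real.rpow_neg hu0.le,
        ← Real.rpow_mul hu0.le]
      congr 1
      rw [hsdef]; ring
    calc g z = ENNReal.ofReal ‖iteratedDeriv n F (z + (ε:ℂ))‖ ^ p := by
          rw [hgdef, ofReal_norm, enorm_eq_nnnorm]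
      _ ≤ ENNReal.ofReal (cnC M n * (((2:ℝ)^k * r / 2) ^ (M+n))⁻¹) ^ p :=
          ENNReal.rpow_le_rpow (ENNReal.ofReal_le_ofReal hnle) hp0.le
      _ = ENNReal.ofReal ((cnC M n * (((2:ℝ)^k * r / 2) ^ (M+n))⁻¹) ^ p) :=
          ENNReal.ofReal_rpow_of_nonneg (mul_nonneg (cnC_nonneg M n) (by positivity)) hp0.le
      _ = ENNReal.ofReal (γ * ((2:ℝ)^k * r) ^ (-s)) := by rw [hbeq]
  -- measurability of E k
  have htmeas : Measurable t := by
    apply Measurable.add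
    · exact (Complex.measurable_re.add_const r)
    · exact (Complex.measurable_im.sub_const a.im).abs
  have hEmeas : ∀ k, MeasurableSet (E k) := by
    intro k
    have hek : E k = Complex.re ⁻¹' (Ici 0) ∩ t ⁻¹' (Ico ((2:ℝ)^k * r) ((2:ℝ)^(k+1) * r)) := by
      ext z
      simp only [hEdef, Set.mem_setOf_eq, Set.mem_inter_iff, Set.mem_preimage, Set.mem_Ici,
        Set.mem_Ico, and_assoc]
    rw [hek]
    exact (Complex.measurable_re measurableSet_Ici).inter (htmeas measurableSet_Ico)
  -- covering
  have hcover : {z : ℂ | 0 ≤ z.re} ⊆ ⋃ k, E k := by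
    intro z hz0
    simp only [Set.mem_setOf_eq] at hz0
    have htr : r ≤ t z := by
      have : 0 ≤ |z.im - a.im| := abs_nonneg _
      simp only [htdef]; linarith
    have hex : ∃ k : ℕ, t z < 2^(k+1) * r := by
      obtain ⟨k, hk⟩ := pow_unbounded_of_one_lt (t z / r) one_lt_two
      exact ⟨k, by rw [div_lt_iff₀ hr0] at hk; calc t z < 2^k * r := hk
        _ ≤ 2^(k+1) * r := by
          have : (2:ℝ)^k ≤ 2^(k+1) := by
            apply pow_le_pow_right₀ (by norm_num) (by omega)
          nlinarith⟩
    let k₀ := Nat.find hex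
    refine Set.mem_iUnion.2 ⟨k₀, hz0, ?_, Nat.find_spec hex⟩
    rcases Nat.eq_zero_or_pos k₀ with h0 | h0
    · rw [h0]; simpa using htr
    · have := Nat.find_min hex (m := k₀ - 1) (by omega)
      push_neg at this
      calc (2:ℝ)^k₀ * r = 2^(k₀ - 1 + 1) * r := by congr 2; omega
        _ ≤ t z := this
  -- null half-plane
  have hnull : prodMeasC ν' {z : ℂ | z.re < 0} = 0 := by
    have hset : {z : ℂ | z.re < 0} = {z : ℂ | z.re ∈ Iio 0 ∧ z.im ∈ univ} := by
      ext z; simp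
    rw [hset, prodMeasC_rect ν' _ _ measurableSet_Iio MeasurableSet.univ]
    have : ν' (Iio 0) = 0 := hsupp
    rw [this, zero_mul]
  -- doubling iteration
  have dbl_iter : ∀ (k : ℕ) (u : ℝ), 0 < u →
      ν' (Set.Ico 0 ((2:ℝ)^k * u)) ≤ ENNReal.ofReal R ^ k * ν' (Set.Ico 0 u) := by
    intro k
    induction k with
    | zero => intro u hu; simp
    | succ k ih =>
      intro u hu
      have h2 : (2:ℝ)^(k+1) * u = 2^k * (2*u) := by ring
      rw [h2]
      calc ν' (Set.Ico 0 ((2:ℝ)^k * (2*u))) ≤ ENNReal.ofReal R ^ k * ν' (Set.Ico 0 (2*u)) :=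
            ih (2*u) (by linarith)
        _ ≤ ENNReal.ofReal R ^ k * (ENNReal.ofReal R * ν' (Set.Ico 0 u)) :=
            mul_le_mul_right (hdbl u hu) _
        _ = ENNReal.ofReal R ^ (k+1) * ν' (Set.Ico 0 u) := by rw [pow_succ]; ring
  -- measure of E k
  have hrect : ∀ k, prodMeasC ν' (E k) ≤
      ENNReal.ofReal R ^ k * V * ENNReal.ofReal (2^(k+2) * r) := by
    intro k
    have hsub : E k ⊆ {z : ℂ | z.re ∈ Ico 0 ((2:ℝ)^(k+1) * r) ∧
        z.im ∈ Ioo (a.im - 2^(k+1) * r) (a.im + 2^(k+1) * r)} := by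
      intro z hz
      obtain ⟨hz0, -, htz⟩ := hz
      have habs : 0 ≤ |z.im - a.im| := abs_nonneg _
      have h1 : |z.im - a.im| ≤ t z - r - z.re := by simp only [htdef]; linarith
      have h2 : |z.im - a.im| < 2^(k+1) * r := by
        calc |z.im - a.im| ≤ t z - r - z.re := h1
          _ < 2^(k+1) * r := by linarith
      rw [abs_sub_lt_iff] at h2
      constructor
      · constructor
        · exact hz0
        · have : z.re ≤ t z - r := by simp only [htdef]; linarith
          linarith
      · constructor <;> linarith [h2.1, h2.2]
    calc prodMeasC ν' (E k) ≤ prodMeasC ν' {z : ℂ | z.re ∈ Ico 0 ((2:ℝ)^(k+1) * r) ∧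
          z.im ∈ Ioo (a.im - 2^(k+1) * r) (a.im + 2^(k+1) * r)} := measure_mono hsub
      _ = ν' (Ico 0 ((2:ℝ)^(k+1) * r)) *
            volume (Ioo (a.im - 2^(k+1) * r) (a.im + 2^(k+1) * r)) :=
          prodMeasC_rect ν' _ _ measurableSet_Ico measurableSet_Ioo
      _ ≤ ENNReal.ofReal R ^ k * V * ENNReal.ofReal (2^(k+2) * r) := by
          rw [Real.volume_Ioo]
          have hico : Ico (0:ℝ) ((2:ℝ)^(k+1) * r) = Ico 0 ((2:ℝ)^k * (2*r)) := by
            congr 1; ring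
          have hlen : a.im + 2^(k+1) * r - (a.im - 2^(k+1) * r) = 2^(k+2) * r := by ring
          rw [hico, hlen, hVdef]
          exact mul_le_mul_left (dbl_iter k (2*r) (by linarith)) _
  -- term bound
  have hterm : ∀ k : ℕ, ENNReal.ofReal (γ * ((2:ℝ)^k * r) ^ (-s)) *
        (ENNReal.ofReal R ^ k * V * ENNReal.ofReal (2^(k+2) * r)) ≤
      (ENNReal.ofReal (4*γ*r^((1:ℝ)-s)) * V) * 2⁻¹ ^ k := by
    intro k
    have hreal : γ * ((2:ℝ)^k * r) ^ (-s) * (R^k * (2^(k+2) * r)) ≤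
        (4*γ*r^((1:ℝ)-s)) * (1/2)^k := by
      have hu0 : (0:ℝ) < (2:ℝ)^k * r := by positivity
      have e1 : ((2:ℝ)^k * r) ^ (-s) = ((2:ℝ)^k) ^ (-s) * r ^ (-s) :=
        Real.mul_rpow (by positivity) hr0.le
      have e2 : ((2:ℝ)^k) ^ (-s) = ((2:ℝ)^((1:ℝ)-s))^k / 2^k := by
        rw [← Real.rpow_natCast (2:ℝ) k, ← Real.rpow_mul (by norm_num),
          ← Real.rpow_natCast ((2:ℝ)^((1:ℝ)-s)) k, ← Real.rpow_mul (by norm_num),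
          ← Real.rpow_sub (by norm_num)]
        congr 1; ring
      have e3 : r ^ ((1:ℝ)-s) = r ^ (-s) * r := by
        rw [show (1:ℝ)-s = -s + 1 by ring, Real.rpow_add hr0, Real.rpow_one]
      have hhalf : (2:ℝ)^((1:ℝ)-s) * R ≤ 1/2 := by
        have h2 : (2:ℝ)^((1:ℝ)-s) ≤ (2:ℝ)^((1:ℝ)-(M:ℝ)) :=
          Real.rpow_le_rpow_of_exponent_le one_le_two (by linarith)
        have hR0 : (0:ℝ) ≤ R := by linarith
        calc (2:ℝ)^((1:ℝ)-s) * R ≤ (2:ℝ)^((1:ℝ)-(M:ℝ)) * R :=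
              mul_le_mul_of_nonneg_right h2 hR0
          _ ≤ 1/2 := by linarith [hM]
      have hpow : ((2:ℝ)^((1:ℝ)-s) * R)^k ≤ (1/2:ℝ)^k :=
        pow_le_pow_left₀ (mul_nonneg (Real.rpow_nonneg (by norm_num) _) (by linarith)) hhalf k
      have hfin : γ * ((2:ℝ)^k * r) ^ (-s) * (R^k * (2^(k+2) * r)) =
          (4*γ*r^((1:ℝ)-s)) * ((2:ℝ)^((1:ℝ)-s) * R)^k := by
        rw [e1, e2, e3, mul_pow]
        have h2k : ((2:ℝ)^k) ≠ 0 := by positivity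
        field_simp
        ring
      rw [hfin]
      have h40 : (0:ℝ) ≤ 4*γ*r^((1:ℝ)-s) :=
        mul_nonneg (mul_nonneg (by norm_num) hγ0) (Real.rpow_nonneg hr0.le _)
      exact mul_le_mul_of_nonneg_left hpow h40
    have h40 : (0:ℝ) ≤ 4*γ*r^((1:ℝ)-s) :=
      mul_nonneg (mul_nonneg (by norm_num) hγ0) (Real.rpow_nonneg hr0.le _)
    have hcomb : ENNReal.ofReal (γ * ((2:ℝ)^k * r) ^ (-s)) *
          (ENNReal.ofReal R ^ k * V * ENNReal.ofReal (2^(k+2) * r)) =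
        ENNReal.ofReal (γ * ((2:ℝ)^k * r) ^ (-s) * (R^k * (2^(k+2) * r))) * V := by
      rw [← ENNReal.ofReal_pow (by linarith : (0:ℝ) ≤ R) k]
      rw [ENNReal.ofReal_mul (mul_nonneg hγ0 (Real.rpow_nonneg (by positivity) _)),
        ENNReal.ofReal_mul (by positivity : (0:ℝ) ≤ (R:ℝ)^k)]
      ring
    rw [hcomb]
    calc ENNReal.ofReal (γ * ((2:ℝ)^k * r) ^ (-s) * (R^k * (2^(k+2) * r))) * V
        ≤ ENNReal.ofReal ((4*γ*r^((1:ℝ)-s)) * (1/2)^k) * V :=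
          mul_le_mul_left (ENNReal.ofReal_le_ofReal hreal) V
      _ = (ENNReal.ofReal (4*γ*r^((1:ℝ)-s)) * V) * 2⁻¹ ^ k := by
          rw [ENNReal.ofReal_mul h40, ENNReal.ofReal_pow (by norm_num : (0:ℝ) ≤ 1/2)]
          have h12 : ENNReal.ofReal (1/2 : ℝ) = 2⁻¹ := by
            rw [one_div, ENNReal.ofReal_inv_of_pos (by norm_num), ENNReal.ofReal_ofNat]
          rw [h12]; ring
  -- main chain
  have hS : MeasurableSet {z : ℂ | 0 ≤ z.re} :=
    measurableSet_le measurable_const Complex.measurable_re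
  have hnull' : prodMeasC ν' {z : ℂ | 0 ≤ z.re}ᶜ = 0 := by
    have hc : {z : ℂ | 0 ≤ z.re}ᶜ = {z : ℂ | z.re < 0} := by
      ext z; simp [not_le]
    rw [hc]; exact hnull
  calc ∫⁻ z, g z ∂(prodMeasC ν')
      = ∫⁻ z in {z : ℂ | 0 ≤ z.re}, g z ∂(prodMeasC ν') := by
        rw [← lintegral_add_compl g hS,
          setLIntegral_measure_zero _ _ hnull', add_zero]
    _ ≤ ∫⁻ z in ⋃ k, E k, g z ∂(prodMeasC ν') := lintegral_mono_set hcover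
    _ ≤ ∑' k, ∫⁻ z in E k, g z ∂(prodMeasC ν') := lintegral_iUnion_le E g
    _ ≤ ∑' k : ℕ, (ENNReal.ofReal (4*γ*r^((1:ℝ)-s)) * V) * 2⁻¹ ^ k := by
        apply ENNReal.tsum_le_tsum
        intro k
        calc ∫⁻ z in E k, g z ∂(prodMeasC ν')
            ≤ ∫⁻ _ in E k, ENNReal.ofReal (γ * ((2:ℝ)^k * r) ^ (-s)) ∂(prodMeasC ν') :=
              setLIntegral_mono measurable_const (key k)
          _ = ENNReal.ofReal (γ * ((2:ℝ)^k * r) ^ (-s)) * prodMeasC ν' (E k) :=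
              setLIntegral_const _ _
          _ ≤ ENNReal.ofReal (γ * ((2:ℝ)^k * r) ^ (-s)) *
                (ENNReal.ofReal R ^ k * V * ENNReal.ofReal (2^(k+2) * r)) :=
              mul_le_mul_right (hrect k) _
          _ ≤ (ENNReal.ofReal (4*γ*r^((1:ℝ)-s)) * V) * 2⁻¹ ^ k := hterm k
    _ = (ENNReal.ofReal (4*γ*r^((1:ℝ)-s)) * V) * ∑' k : ℕ, 2⁻¹ ^ k := ENNReal.tsum_mul_left
    _ ≤ ENNReal.ofReal (8 * γ * r ^ ((1:ℝ)-s)) * V := by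
        rw [ENNReal.tsum_geometric, ENNReal.one_sub_inv_two, inv_inv]
        have h40 : (0:ℝ) ≤ 4*γ*r^((1:ℝ)-s) :=
          mul_nonneg (mul_nonneg (by norm_num) hγ0) (Real.rpow_nonneg hr0.le _)
        have h8 : ENNReal.ofReal (8 * γ * r ^ ((1:ℝ)-s)) =
            ENNReal.ofReal (4*γ*r^((1:ℝ)-s)) * 2 := by
          rw [show (2:ℝ≥0∞) = ENNReal.ofReal 2 from (ENNReal.ofReal_ofNat 2).symm,
            ← ENNReal.ofReal_mul h40]
          congr 1; ring
        rw [h8]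
        apply le_of_eq
        ring

set_option maxHeartbeats 1000000 in
/-- if the embedding `A^p(ℂ₊,(ν_n)_{n=0}^m) ↪ L^q(ℂ₊,μ)` is bounded,
then `μ(Q(a)) ≤ C [Σ_{n=0}^m ν_n(closure Q(a))/(Re a)^{np}]^{q/p}` for all `a ∈ ℂ₊`. -/
theorem carleson_square_bound_of_ap_embedding_bounded
    (p q : ℝ) (hp : 1 ≤ p) (hq : 1 ≤ q) (m : ℕ)
    (ν' : ℕ → Measure ℝ) (hreg : ∀ n ≤ m, (ν' n).Regular)
    (hsupp : ∀ n ≤ m, ν' n {x : ℝ | x < 0} = 0)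
    (hΔ₂ : ∀ n ≤ m, ∃ R : ℝ, 0 ≤ R ∧
      ∀ r > 0, ν' n (Set.Ico 0 (2 * r)) ≤ ENNReal.ofReal R * ν' n (Set.Ico 0 r))
    (μ : Measure ℂ)
    (hbdd : ∃ C' > 0, ∀ F : ℂ → ℂ, DifferentiableOn ℂ F {z : ℂ | 0 < z.re} →
      (∫⁻ z, (‖F z‖₊ : ℝ≥0∞) ^ q ∂μ) ^ (1/q) ≤
        ENNReal.ofReal C' * (apNormPow p m (fun n => prodMeasC (ν' n)) F) ^ (1/p)) :
    ∃ C > 0, ∀ a : ℂ, 0 < a.re →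
      μ (carlesonQ a) ≤ ENNReal.ofReal C *
        (∑ n ∈ Finset.range (m + 1),
          prodMeasC (ν' n) (closure (carlesonQ a)) /
            ENNReal.ofReal (a.re ^ ((n : ℝ) * p))) ^ (q/p) := by
  obtain ⟨C', hC'pos, hC'⟩ := hbdd
  have hp0 : (0:ℝ) < p := lt_of_lt_of_le one_pos hp
  have hq0 : (0:ℝ) < q := lt_of_lt_of_le one_pos hq
  -- uniform doubling constant
  obtain ⟨R₀, hR₀1, hR₀dbl⟩ : ∃ R₀ : ℝ, 1 ≤ R₀ ∧ ∀ n ≤ m, ∀ s > 0,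
      ν' n (Set.Ico 0 (2*s)) ≤ ENNReal.ofReal R₀ * ν' n (Set.Ico 0 s) := by
    choose Rf hRf0 hRfdbl using hΔ₂
    have hsum0 : ∀ i ∈ Finset.range (m+1), (0:ℝ) ≤ (if h : i ≤ m then Rf i h else 0) := by
      intro i _
      by_cases h : i ≤ m
      · rw [dif_pos h]; exact hRf0 _ _
      · rw [dif_neg h]
    refine ⟨1 + ∑ n ∈ Finset.range (m+1), (if h : n ≤ m then Rf n h else 0), ?_, ?_⟩
    · have := Finset.sum_nonneg hsum0
      linarith
    · intro n hn s hs
      have hle : Rf n hn ≤ 1 + ∑ i ∈ Finset.range (m+1), (if h : i ≤ m then Rf i h else 0) := by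
        have h1 : (if h : n ≤ m then Rf n h else 0) ≤
            ∑ i ∈ Finset.range (m+1), (if h : i ≤ m then Rf i h else 0) :=
          Finset.single_le_sum hsum0 (Finset.mem_range.2 (by omega))
        rw [dif_pos hn] at h1
        linarith
      calc ν' n (Set.Ico 0 (2*s)) ≤ ENNReal.ofReal (Rf n hn) * ν' n (Set.Ico 0 s) :=
            hRfdbl n hn s hs
        _ ≤ _ := mul_le_mul_left (ENNReal.ofReal_le_ofReal hle) _
  have hR₀0 : (0:ℝ) < R₀ := by linarith
  -- choose M large
  obtain ⟨M, hMhalf⟩ : ∃ M : ℕ, R₀ * (2:ℝ) ^ ((1:ℝ)-(M:ℝ)) ≤ 1/2 := by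
    obtain ⟨N, hN⟩ := exists_nat_gt R₀
    refine ⟨N + 2, ?_⟩
    have h1 : (1:ℝ) - ((N+2:ℕ):ℝ) = -(((N+1:ℕ):ℝ)) := by push_cast; ring
    rw [h1, Real.rpow_neg (by norm_num), Real.rpow_natCast]
    have hN2 : (N:ℝ) ≤ 2^N := by exact_mod_cast (Nat.lt_two_pow_self (n := N)).le
    have h2N : (0:ℝ) < 2^(N+1) := by positivity
    rw [← div_eq_mul_inv, div_le_iff₀ h2N]
    have hpow : (1:ℝ)/2 * 2^(N+1) = 2^N := by rw [pow_succ]; ring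
    rw [hpow]
    linarith
  -- the uniform constant κ
  obtain ⟨κ, hκ1, hκn⟩ : ∃ κ : ℝ, 1 ≤ κ ∧ ∀ n ≤ m, 8 * (cnC M n * 2^(M+n))^p ≤ κ := by
    have hterm0 : ∀ i ∈ Finset.range (m+1), (0:ℝ) ≤ 8 * (cnC M i * 2^(M+i))^p := by
      intro i _
      exact mul_nonneg (by norm_num)
        (Real.rpow_nonneg (mul_nonneg (cnC_nonneg M i) (by positivity)) _)
    refine ⟨1 + ∑ i ∈ Finset.range (m+1), 8 * (cnC M i * 2^(M+i))^p, ?_, ?_⟩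
    · have := Finset.sum_nonneg hterm0
      linarith
    · intro n hn
      have h1 := Finset.single_le_sum hterm0 (Finset.mem_range.2 (show n < m+1 by omega))
      linarith
  have hκ0 : (0:ℝ) < κ := by linarith
  -- the final constant
  refine ⟨(4^M * (C' * κ^((1:ℝ)/p)))^q, Real.rpow_pos_of_pos (by positivity) q, ?_⟩
  intro a ha
  set r : ℝ := a.re with hrdef
  have hr0 : 0 < r := ha
  set F : ℂ → ℂ := fun w : ℂ => (w + (starRingEnd ℂ) a) ^ (-(M:ℤ)) with hFdef
  set B : ℝ≥0∞ := ∑ n ∈ Finset.range (m + 1),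
      prodMeasC (ν' n) (closure (carlesonQ a)) / ENNReal.ofReal (a.re ^ ((n : ℝ) * p))
    with hBdef
  -- differentiability
  have hne : ∀ z : ℂ, 0 ≤ z.re → z + (starRingEnd ℂ) a ≠ 0 := by
    intro z hz h0
    have := congrArg Complex.re h0
    simp only [Complex.add_re, Complex.conj_re, Complex.zero_re] at this
    linarith
  have hdiff : DifferentiableOn ℂ F {z : ℂ | 0 < z.re} := by
    intro z hz
    simp only [Set.mem_setOf_eq] at hz
    have h1 : DifferentiableAt ℂ (fun w : ℂ => w ^ (-(M:ℤ))) (z + (starRingEnd ℂ) a) :=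
      differentiableAt_zpow.2 (Or.inl (hne z hz.le))
    exact (h1.comp z ((differentiableAt_fun_id).add_const _)).differentiableWithinAt
  -- carleson square as rectangle
  have hQrect : carlesonQ a = {z : ℂ | z.re ∈ Ico 0 (2*r) ∧
      z.im ∈ Icc (a.im - r) (a.im + r)} := by
    ext z
    simp only [carlesonQ, Set.mem_setOf_eq, Set.mem_Ico, Set.mem_Icc, abs_sub_le_iff]
    constructor
    · rintro ⟨h1, h2, h3, h4⟩
      exact ⟨⟨h1, h2⟩, by linarith, by linarith⟩
    · rintro ⟨⟨h1, h2⟩, h3, h4⟩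
      exact ⟨h1, h2, by linarith, by linarith⟩
  have hQval : ∀ n : ℕ, prodMeasC (ν' n) (carlesonQ a) =
      ν' n (Set.Ico 0 (2*r)) * ENNReal.ofReal (2*r) := by
    intro n
    rw [hQrect, prodMeasC_rect _ _ _ measurableSet_Ico measurableSet_Icc, Real.volume_Icc]
    congr 2
    ring
  have hVle : ∀ n : ℕ, ν' n (Set.Ico 0 (2*r)) * ENNReal.ofReal (2*r) ≤
      prodMeasC (ν' n) (closure (carlesonQ a)) := by
    intro n
    rw [← hQval n]
    exact measure_mono subset_closure
  -- zen norm bound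
  have happ : apNormPow p m (fun n => prodMeasC (ν' n)) F ≤
      ENNReal.ofReal (κ * r^(-(M:ℝ)*p)) * B := by
    rw [apNormPow, hBdef, Finset.mul_sum]
    apply Finset.sum_le_sum
    intro n hn
    have hnm : n ≤ m := by
      have := Finset.mem_range.1 hn; omega
    have hzen : zenNormPow p (prodMeasC (ν' n)) (iteratedDeriv n F) ≤
        ENNReal.ofReal (8 * (cnC M n * 2^(M+n))^p * r ^ ((1:ℝ) - ((M+n : ℕ):ℝ) * p))
          * ν' n (Set.Ico 0 (2*r)) := by
      rw [zenNormPow]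
      exact iSup₂_le fun ε hε =>
        zen_eps_bound p hp (ν' n) (hsupp n hnm) R₀ hR₀1 (hR₀dbl n hnm) M n hMhalf a ha ε hε
    refine le_trans hzen ?_
    have hγn0 : (0:ℝ) ≤ (cnC M n * 2^(M+n))^p :=
      Real.rpow_nonneg (mul_nonneg (cnC_nonneg M n) (by positivity)) _
    have hd0 : (0:ℝ) < r ^ ((n:ℝ)*p) := Real.rpow_pos_of_pos hr0 _
    have hexp : r ^ ((1:ℝ) - ((M+n : ℕ):ℝ) * p) =
        r^(-(M:ℝ)*p) * ((r^((n:ℝ)*p))⁻¹ * r) := by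
      have he : (1:ℝ) - ((M+n : ℕ):ℝ) * p = (-(M:ℝ)*p) + (-((n:ℝ)*p) + 1) := by
        push_cast; ring
      rw [he, Real.rpow_add hr0, Real.rpow_add hr0, Real.rpow_one,
        Real.rpow_neg hr0.le ((n:ℝ)*p)]
    have hreal : 8 * (cnC M n * 2^(M+n))^p * r ^ ((1:ℝ) - ((M+n : ℕ):ℝ) * p) ≤
        (κ * r^(-(M:ℝ)*p)) * ((r^((n:ℝ)*p))⁻¹ * (2*r)) := by
      have hX : (0:ℝ) ≤ r^(-(M:ℝ)*p) * ((r^((n:ℝ)*p))⁻¹ * r) := by positivity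
      calc 8 * (cnC M n * 2^(M+n))^p * r ^ ((1:ℝ) - ((M+n : ℕ):ℝ) * p)
          = (8 * (cnC M n * 2^(M+n))^p) * (r^(-(M:ℝ)*p) * ((r^((n:ℝ)*p))⁻¹ * r)) := by
            rw [hexp]
        _ ≤ (2*κ) * (r^(-(M:ℝ)*p) * ((r^((n:ℝ)*p))⁻¹ * r)) := by
            apply mul_le_mul_of_nonneg_right _ hX
            have h8 := hκn n hnm
            linarith
        _ = (κ * r^(-(M:ℝ)*p)) * ((r^((n:ℝ)*p))⁻¹ * (2*r)) := by ring
    have hκr0 : (0:ℝ) ≤ κ * r^(-(M:ℝ)*p) :=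
      mul_nonneg (by linarith) (Real.rpow_nonneg hr0.le _)
    calc ENNReal.ofReal (8 * (cnC M n * 2^(M+n))^p * r ^ ((1:ℝ) - ((M+n : ℕ):ℝ) * p)) *
          ν' n (Set.Ico 0 (2*r))
        ≤ ENNReal.ofReal ((κ * r^(-(M:ℝ)*p)) * ((r^((n:ℝ)*p))⁻¹ * (2*r))) *
            ν' n (Set.Ico 0 (2*r)) :=
          mul_le_mul_left (ENNReal.ofReal_le_ofReal hreal) _
      _ = ENNReal.ofReal (κ * r^(-(M:ℝ)*p)) *
            ((ν' n (Set.Ico 0 (2*r)) * ENNReal.ofReal (2*r)) *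
              ENNReal.ofReal ((r^((n:ℝ)*p))⁻¹)) := by
          rw [ENNReal.ofReal_mul hκr0,
            ENNReal.ofReal_mul (inv_nonneg.2 hd0.le)]
          ring
      _ ≤ ENNReal.ofReal (κ * r^(-(M:ℝ)*p)) *
            (prodMeasC (ν' n) (closure (carlesonQ a)) *
              ENNReal.ofReal ((r^((n:ℝ)*p))⁻¹)) :=
          mul_le_mul_right (mul_le_mul_left (hVle n) _) _
      _ = ENNReal.ofReal (κ * r^(-(M:ℝ)*p)) *
            (prodMeasC (ν' n) (closure (carlesonQ a)) /
              ENNReal.ofReal (a.re ^ ((n : ℝ) * p))) := by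
          rw [div_eq_mul_inv, ENNReal.ofReal_inv_of_pos hd0]
  -- measurability of the test function
  have hFmeas : Measurable F := by
    have hFalt : F = fun z : ℂ => ((z + (starRingEnd ℂ) a)^M)⁻¹ := by
      funext z
      simp only [hFdef]
      rw [zpow_neg, zpow_natCast]
    rw [hFalt]
    exact ((measurable_id.add_const _).pow_const M).inv
  -- lower bound for F on the Carleson square
  have hclow : ∀ z ∈ carlesonQ a,
      ENNReal.ofReal ((((4*r)^M)⁻¹)^q) ≤ (‖F z‖₊ : ℝ≥0∞)^q := by
    intro z hz
    obtain ⟨h1, h2, h3⟩ := hz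
    have hwre : (z + (starRingEnd ℂ) a).re = z.re + r := by
      simp [Complex.add_re, Complex.conj_re, hrdef]
    have hwim : (z + (starRingEnd ℂ) a).im = z.im - a.im := by
      simp [Complex.add_im, Complex.conj_im, sub_eq_add_neg]
    have habs : ‖z + (starRingEnd ℂ) a‖ ≤ 4*r := by
      have h4 := Complex.norm_le_abs_re_add_abs_im (z + (starRingEnd ℂ) a)
      rw [hwre, hwim] at h4
      have habs2 : |z.re + r| = z.re + r := abs_of_nonneg (by linarith)
      rw [habs2] at h4
      have : z.re < 2*r := h2
      linarith
    have hwpos : (0:ℝ) < ‖z + (starRingEnd ℂ) a‖ := by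
      rw [norm_pos_iff]
      exact hne z h1
    have hnorm : ‖F z‖ = (‖z + (starRingEnd ℂ) a‖^M)⁻¹ := by
      simp only [hFdef]
      rw [norm_zpow, zpow_neg, zpow_natCast]
    have hle : ((4*r)^M)⁻¹ ≤ ‖F z‖ := by
      rw [hnorm]
      exact inv_anti₀ (pow_pos hwpos M) (pow_le_pow_left₀ (norm_nonneg _) habs M)
    calc ENNReal.ofReal ((((4*r)^M)⁻¹)^q) = ENNReal.ofReal (((4*r)^M)⁻¹) ^ q :=
        (ENNReal.ofReal_rpow_of_nonneg (by positivity) hq0.le).symm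
      _ ≤ ENNReal.ofReal ‖F z‖ ^ q :=
          ENNReal.rpow_le_rpow (ENNReal.ofReal_le_ofReal hle) hq0.le
      _ = (‖F z‖₊ : ℝ≥0∞)^q := by rw [ofReal_norm, enorm_eq_nnnorm]
  have hlow : ENNReal.ofReal ((((4*r)^M)⁻¹)^q) * μ (carlesonQ a) ≤
      ∫⁻ z, (‖F z‖₊:ℝ≥0∞)^q ∂μ := by
    calc ENNReal.ofReal ((((4*r)^M)⁻¹)^q) * μ (carlesonQ a)
        = ∫⁻ _ in carlesonQ a, ENNReal.ofReal ((((4*r)^M)⁻¹)^q) ∂μ :=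
          (setLIntegral_const _ _).symm
      _ ≤ ∫⁻ z in carlesonQ a, (‖F z‖₊:ℝ≥0∞)^q ∂μ :=
          setLIntegral_mono ((hFmeas.nnnorm.coe_nnreal_ennreal).pow_const q) hclow
      _ ≤ ∫⁻ z, (‖F z‖₊:ℝ≥0∞)^q ∂μ := setLIntegral_le_lintegral _ _
  -- put everything together
  have hemb := hC' F hdiff
  have hCκ0 : (0:ℝ) < C' * κ^((1:ℝ)/p) := mul_pos hC'pos (Real.rpow_pos_of_pos hκ0 _)
  have hκr0' : (0:ℝ) ≤ κ * r^(-(M:ℝ)*p) := mul_nonneg hκ0.le (Real.rpow_nonneg hr0.le _)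
  have e1 : (ENNReal.ofReal ((((4*r)^M)⁻¹)^q) * μ (carlesonQ a))^(1/q)
      = ENNReal.ofReal (((4*r)^M)⁻¹) * (μ (carlesonQ a))^(1/q) := by
    rw [← ENNReal.ofReal_rpow_of_nonneg (by positivity : (0:ℝ) ≤ (((4*r)^M)⁻¹)) hq0.le,
      ENNReal.mul_rpow_of_nonneg _ _ (by positivity : (0:ℝ) ≤ 1/q), ← ENNReal.rpow_mul,
      mul_one_div, div_self hq0.ne', ENNReal.rpow_one]
  have hchain : ENNReal.ofReal (((4*r)^M)⁻¹) * (μ (carlesonQ a))^(1/q) ≤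
      ENNReal.ofReal (C' * κ^((1:ℝ)/p)) * (ENNReal.ofReal ((r^M)⁻¹) * B^(1/p)) := by
    calc ENNReal.ofReal (((4*r)^M)⁻¹) * (μ (carlesonQ a))^(1/q)
        = (ENNReal.ofReal ((((4*r)^M)⁻¹)^q) * μ (carlesonQ a))^(1/q) := e1.symm
      _ ≤ (∫⁻ z, (‖F z‖₊:ℝ≥0∞)^q ∂μ)^(1/q) :=
          ENNReal.rpow_le_rpow hlow (by positivity)
      _ ≤ ENNReal.ofReal C' * (apNormPow p m (fun n => prodMeasC (ν' n)) F)^(1/p) := hemb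
      _ ≤ ENNReal.ofReal C' * (ENNReal.ofReal (κ * r^(-(M:ℝ)*p)) * B)^(1/p) :=
          mul_le_mul_right (ENNReal.rpow_le_rpow happ (by positivity)) _
      _ = ENNReal.ofReal (C' * κ^((1:ℝ)/p)) * (ENNReal.ofReal ((r^M)⁻¹) * B^(1/p)) := by
          rw [ENNReal.mul_rpow_of_nonneg _ _ (by positivity : (0:ℝ) ≤ 1/p),
            ENNReal.ofReal_rpow_of_nonneg hκr0' (by positivity)]
          have hsplit : (κ * r^(-(M:ℝ)*p))^((1:ℝ)/p) = κ^((1:ℝ)/p) * (r^M)⁻¹ := by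
            rw [Real.mul_rpow hκ0.le (Real.rpow_nonneg hr0.le _), ← Real.rpow_mul hr0.le]
            have hexp2 : (-(M:ℝ)*p)*((1:ℝ)/p) = -(M:ℝ) := by field_simp
            rw [hexp2, Real.rpow_neg hr0.le, Real.rpow_natCast]
          rw [show ((1:ℝ))/p = 1/p from rfl] at hsplit
          rw [hsplit, ENNReal.ofReal_mul (Real.rpow_nonneg hκ0.le _),
            ENNReal.ofReal_mul hC'pos.le]
          ring
  have h4r : ENNReal.ofReal (((4*r)^M)⁻¹) =
      ENNReal.ofReal (((4:ℝ)^M)⁻¹) * ENNReal.ofReal ((r^M)⁻¹) := by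
    rw [← ENNReal.ofReal_mul (by positivity)]
    congr 1
    rw [mul_pow, mul_inv]
  have hX0 : ENNReal.ofReal ((r^M)⁻¹) ≠ 0 := (ENNReal.ofReal_pos.2 (by positivity)).ne'
  have hXtop : ENNReal.ofReal ((r^M)⁻¹) ≠ ⊤ := ENNReal.ofReal_ne_top
  have hcancel : ENNReal.ofReal (((4:ℝ)^M)⁻¹) * (μ (carlesonQ a))^(1/q) ≤
      ENNReal.ofReal (C' * κ^((1:ℝ)/p)) * B^(1/p) := by
    rw [h4r] at hchain
    have h2 : (ENNReal.ofReal (((4:ℝ)^M)⁻¹) * (μ (carlesonQ a))^(1/q)) *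
          ENNReal.ofReal ((r^M)⁻¹) ≤
        (ENNReal.ofReal (C' * κ^((1:ℝ)/p)) * B^(1/p)) * ENNReal.ofReal ((r^M)⁻¹) := by
      calc (ENNReal.ofReal (((4:ℝ)^M)⁻¹) * (μ (carlesonQ a))^(1/q)) *
            ENNReal.ofReal ((r^M)⁻¹)
          = ENNReal.ofReal (((4:ℝ)^M)⁻¹) * ENNReal.ofReal ((r^M)⁻¹) *
              (μ (carlesonQ a))^(1/q) := by ring
        _ ≤ ENNReal.ofReal (C' * κ^((1:ℝ)/p)) * (ENNReal.ofReal ((r^M)⁻¹) * B^(1/p)) :=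
            hchain
        _ = (ENNReal.ofReal (C' * κ^((1:ℝ)/p)) * B^(1/p)) * ENNReal.ofReal ((r^M)⁻¹) := by
            ring
    exact (ENNReal.mul_le_mul_iff_left hX0 hXtop).1 h2
  have hfin1 : (μ (carlesonQ a))^(1/q) ≤
      ENNReal.ofReal (4^M * (C' * κ^((1:ℝ)/p))) * B^(1/p) := by
    have h4 : ENNReal.ofReal ((4:ℝ)^M) * ENNReal.ofReal (((4:ℝ)^M)⁻¹) = 1 := by
      rw [← ENNReal.ofReal_mul (by positivity), mul_inv_cancel₀ (by positivity),
        ENNReal.ofReal_one]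
    calc (μ (carlesonQ a))^(1/q)
        = ENNReal.ofReal ((4:ℝ)^M) *
            (ENNReal.ofReal (((4:ℝ)^M)⁻¹) * (μ (carlesonQ a))^(1/q)) := by
          rw [← mul_assoc, h4, one_mul]
      _ ≤ ENNReal.ofReal ((4:ℝ)^M) *
            (ENNReal.ofReal (C' * κ^((1:ℝ)/p)) * B^(1/p)) := mul_le_mul_right hcancel _
      _ = ENNReal.ofReal (4^M * (C' * κ^((1:ℝ)/p))) * B^(1/p) := by
          rw [ENNReal.ofReal_mul (by positivity : (0:ℝ) ≤ (4:ℝ)^M),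
            ENNReal.ofReal_mul hC'pos.le]
          ring
  calc μ (carlesonQ a) = ((μ (carlesonQ a))^(1/q))^q := by
        rw [← ENNReal.rpow_mul, one_div, inv_mul_cancel₀ hq0.ne', ENNReal.rpow_one]
    _ ≤ (ENNReal.ofReal (4^M * (C' * κ^((1:ℝ)/p))) * B^(1/p))^q :=
        ENNReal.rpow_le_rpow hfin1 hq0.le
    _ = ENNReal.ofReal ((4^M * (C' * κ^((1:ℝ)/p)))^q) * B^(q/p) := by
        rw [ENNReal.mul_rpow_of_nonneg _ _ hq0.le,
          ENNReal.ofReal_rpow_of_nonneg (mul_nonneg (by positivity) hCκ0.le) hq0.le,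
          ← ENNReal.rpow_mul]
        congr 1
        ring
end

section
/- Let 1 < p < ∞, 1 ≤ q < ∞, let w be a measurable weight on (0,∞), and let μ be a positive Borel measure on ℂ₊ supported on the positive real axis (0,∞). If the Laplace–Carleson embedding 𝔏 : L^p_w(0,∞) → L^q(ℂ₊, μ) is bounded, then there exists a constant C > 0 such that for every r > 0 for which the integral ∫₀^∞ e^{−r p′ t} w(t)^{−1/(p−1)} dt is finite, one has μ((0, r]) ≤ C ( ∫₀^∞ e^{−r p′ t} w(t)^{−1/(p−1)} dt )^{−q/p′}. -/
open MeasureTheory Set Complex Filter ENNReal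
open Topology

/-- if `μ` is supported on `(0,∞)` and the Laplace–Carleson embedding
`𝔏 : L^p_w(0,∞) → L^q(ℂ₊,μ)` is bounded, then
`μ((0,r]) ≤ C (∫₀^∞ e^{-r p' t} w(t)^{-1/(p-1)} dt)^{-q/p'}` whenever the
integral is finite. -/
theorem interval_measure_bound_of_laplace_carleson_bounded
    (p q : ℝ) (hp : 1 < p) (hq : 1 ≤ q)
    (w : ℝ → ℝ) (hw : Measurable w) (hwpos : ∀ t > 0, 0 < w t)
    (μ : Measure ℂ) (hsupp : μ ((Complex.ofReal '' Set.Ioi (0:ℝ))ᶜ) = 0)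
    (hbdd : lcBounded p q w μ) :
    ∃ C > 0, ∀ r > 0,
      (∫⁻ t in Set.Ioi (0:ℝ),
          ENNReal.ofReal (Real.exp (-(r * (p / (p - 1)) * t)) * (w t) ^ (-(1 / (p - 1))))) < ⊤ →
      μ (Complex.ofReal '' Set.Ioc (0:ℝ) r) ≤
        ENNReal.ofReal C *
          (∫⁻ t in Set.Ioi (0:ℝ),
            ENNReal.ofReal (Real.exp (-(r * (p / (p - 1)) * t)) *
              (w t) ^ (-(1 / (p - 1))))) ^ (-(q / (p / (p - 1)))) := by
  classical
  obtain ⟨C, hCpos, hb⟩ := hbdd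
  have hp0 : (0:ℝ) < p := by linarith
  have hp1 : (0:ℝ) < p - 1 := by linarith
  have hp1' : p - 1 ≠ 0 := ne_of_gt hp1
  have hq0 : (0:ℝ) < q := by linarith
  refine ⟨C ^ q, Real.rpow_pos_of_pos hCpos q, ?_⟩
  intro r hr hI
  set E : ℝ → ℝ := fun t => Real.exp (-(r * (p / (p - 1)) * t)) * (w t) ^ (-(1 / (p - 1)))
    with hEdef
  set I : ℝ≥0∞ := ∫⁻ t in Set.Ioi (0:ℝ),
      ENNReal.ofReal (Real.exp (-(r * (p / (p - 1)) * t)) * (w t) ^ (-(1 / (p - 1)))) with hIdef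
  have hIeq : I = ∫⁻ t in Set.Ioi (0:ℝ), ENNReal.ofReal (E t) := rfl
  -- basic objects
  set g : ℝ → ℝ := fun t => Real.exp (-(r / (p - 1) * t)) * (w t) ^ (-(1 / (p - 1))) with hgdef
  have hgmeas : Measurable g := by
    apply Measurable.mul
    · exact Real.measurable_exp.comp ((measurable_id.const_mul _).neg)
    · exact hw.pow measurable_const
  have hEmeas : Measurable E := by
    apply Measurable.mul
    · exact Real.measurable_exp.comp ((measurable_id.const_mul _).neg)
    · exact hw.pow measurable_const
  have hgpos : ∀ t : ℝ, 0 < t → 0 < g t := fun t ht =>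
    mul_pos (Real.exp_pos _) (Real.rpow_pos_of_pos (hwpos t ht) _)
  have hgE : ∀ t : ℝ, g t * Real.exp (-(r * t)) = E t := by
    intro t
    rw [hgdef, hEdef]
    simp only
    rw [mul_right_comm, ← Real.exp_add]
    congr 2
    field_simp
    ring
  have hEpos : ∀ t : ℝ, 0 < t → 0 < E t := by
    intro t ht
    rw [← hgE t]
    exact mul_pos (hgpos t ht) (Real.exp_pos _)
  set f : ℕ → ℝ → ℂ := fun n => (Set.Ioc (0:ℝ) ((n:ℝ)+1)).indicator (fun t => (g t : ℂ))
    with hfdef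
  have hfmeas : ∀ n, Measurable (f n) := fun n =>
    (Complex.measurable_ofReal.comp hgmeas).indicator measurableSet_Ioc
  set J : ℕ → ℝ≥0∞ := fun n => ∫⁻ t in Set.Ioc (0:ℝ) ((n:ℝ)+1), ENNReal.ofReal (E t)
    with hJdef
  have hsub : ∀ n : ℕ, Set.Ioc (0:ℝ) ((n:ℝ)+1) ⊆ Set.Ioi 0 := fun n => Set.Ioc_subset_Ioi_self
  have hJle : ∀ n, J n ≤ I := fun n => lintegral_mono_set (hsub n)
  have hJtop : ∀ n, J n ≠ ⊤ := fun n => ((hJle n).trans_lt hI).ne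
  have hJpos : ∀ n, 0 < J n := by
    intro n
    rw [hJdef]
    simp only
    rw [setLIntegral_pos_iff hEmeas.ennreal_ofReal]
    have hsubset : Set.Ioc (0:ℝ) ((n:ℝ)+1) ⊆
        Function.support (fun t => ENNReal.ofReal (E t)) ∩ Set.Ioc (0:ℝ) ((n:ℝ)+1) := by
      intro t ht
      refine ⟨?_, ht⟩
      simp only [Function.mem_support, ne_eq, ENNReal.ofReal_eq_zero, not_le]
      exact hEpos t ht.1
    calc (0:ℝ≥0∞) < ENNReal.ofReal ((n:ℝ)+1) := by positivity
    _ = volume (Set.Ioc (0:ℝ) ((n:ℝ)+1)) := by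
        rw [Real.volume_Ioc]; norm_num
    _ ≤ _ := measure_mono hsubset
  -- key algebraic identity
  have key : ∀ t : ℝ, 0 < w t → g t ^ p * w t = E t := by
    intro t hx
    rw [hgdef, hEdef]
    simp only
    rw [Real.mul_rpow (Real.exp_pos _).le (Real.rpow_pos_of_pos hx _).le,
      ← Real.exp_mul, ← Real.rpow_mul hx.le, mul_assoc, ← Real.rpow_add_one hx.ne']
    rw [show (-(r / (p - 1) * t) * p : ℝ) = -(r * (p / (p - 1)) * t) by
        rw [neg_mul, neg_inj]; field_simp,
      show (-(1 / (p - 1)) * p + 1 : ℝ) = -(1 / (p - 1)) by field_simp; ring]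
  -- (A) norm computation
  have hnormA : ∀ n, (∫⁻ t in Set.Ioi (0:ℝ), (‖f n t‖₊ : ℝ≥0∞) ^ p * ENNReal.ofReal (w t)) = J n := by
    intro n
    have hpt : ∀ t ∈ Set.Ioi (0:ℝ), (‖f n t‖₊ : ℝ≥0∞) ^ p * ENNReal.ofReal (w t)
        = (Set.Ioc (0:ℝ) ((n:ℝ)+1)).indicator (fun t => ENNReal.ofReal (E t)) t := by
      intro t ht
      by_cases hm : t ∈ Set.Ioc (0:ℝ) ((n:ℝ)+1)
      · rw [Set.indicator_of_mem hm]
        have hwt := hwpos t ht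
        have hg0 : 0 ≤ g t := (hgpos t ht).le
        have h1 : (‖f n t‖₊ : ℝ≥0∞) = ENNReal.ofReal (g t) := by
          rw [hfdef]
          simp only [Set.indicator_of_mem hm]
          rw [← enorm_eq_nnnorm, ← ofReal_norm, Complex.norm_real, Real.norm_eq_abs,
            _root_.abs_of_nonneg hg0]
        rw [h1, ENNReal.ofReal_rpow_of_nonneg hg0 hp0.le,
          ← ENNReal.ofReal_mul (by positivity), key t hwt]
      · rw [Set.indicator_of_notMem hm]
        have hz : f n t = 0 := by rw [hfdef]; exact Set.indicator_of_notMem hm _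
        simp [hz, ENNReal.zero_rpow_of_pos hp0]
    rw [setLIntegral_congr_fun measurableSet_Ioi hpt,
      lintegral_indicator measurableSet_Ioc, Measure.restrict_restrict measurableSet_Ioc,
      Set.inter_eq_self_of_subset_left (hsub n)]
  -- integrability of E on the truncation
  have hEint : ∀ n : ℕ, IntegrableOn E (Set.Ioc (0:ℝ) ((n:ℝ)+1)) := by
    intro n
    refine ⟨hEmeas.aestronglyMeasurable, ?_⟩
    rw [hasFiniteIntegral_iff_norm]
    have : ∫⁻ t in Set.Ioc (0:ℝ) ((n:ℝ)+1), ENNReal.ofReal ‖E t‖ = J n := by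
      refine setLIntegral_congr_fun measurableSet_Ioc ?_
      intro t ht
      simp only
      rw [Real.norm_eq_abs, _root_.abs_of_nonneg (hEpos t ht.1).le]
    rw [this]
    exact (hJtop n).lt_top
  -- (B) lower bound for the Laplace transform on (0, r]
  have hlap : ∀ n : ℕ, ∀ x : ℝ, 0 < x → x ≤ r →
      J n ≤ (‖laplaceT (f n) ((x : ℝ) : ℂ)‖₊ : ℝ≥0∞) := by
    intro n x hx hxr
    have hEn := hEint n
    have hd : IntegrableOn (fun t => g t * Real.exp (-(x*t))) (Set.Ioc (0:ℝ) ((n:ℝ)+1)) := by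
      refine Integrable.mono' ((hEn).const_mul (Real.exp ((r-x)*((n:ℝ)+1)))) ?_ ?_
      · exact (hgmeas.mul
          (Real.measurable_exp.comp ((measurable_id.const_mul x).neg))).aestronglyMeasurable
      · refine (ae_restrict_iff' measurableSet_Ioc).2 (ae_of_all _ ?_)
        intro t ht
        have hg0 : (0:ℝ) ≤ g t := (hgpos t ht.1).le
        rw [Real.norm_eq_abs, _root_.abs_of_nonneg (by positivity)]
        have heq : g t * Real.exp (-(x*t)) = Real.exp ((r-x)*t) * E t := by
          rw [← hgE t, show Real.exp (-(x*t)) = Real.exp ((r-x)*t) * Real.exp (-(r*t)) by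
            rw [← Real.exp_add]; congr 1; ring]
          ring
        rw [heq]
        have hexp : Real.exp ((r-x)*t) ≤ Real.exp ((r-x)*((n:ℝ)+1)) :=
          Real.exp_le_exp.2 (mul_le_mul_of_nonneg_left ht.2 (by linarith))
        have hE0 : 0 ≤ E t := (hEpos t ht.1).le
        exact mul_le_mul_of_nonneg_right hexp hE0
    have hmono2 : ∫ t in Set.Ioc (0:ℝ) ((n:ℝ)+1), E t
        ≤ ∫ t in Set.Ioc (0:ℝ) ((n:ℝ)+1), g t * Real.exp (-(x*t)) := by
      refine setIntegral_mono_on hEn hd measurableSet_Ioc ?_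
      intro t ht
      rw [← hgE t]
      refine mul_le_mul_of_nonneg_left (Real.exp_le_exp.2 ?_) (hgpos t ht.1).le
      nlinarith [ht.1.le]
    have hlapeq : laplaceT (f n) ((x : ℝ) : ℂ)
        = Complex.ofReal (∫ t in Set.Ioc (0:ℝ) ((n:ℝ)+1), g t * Real.exp (-(x*t))) := by
      unfold laplaceT
      have hpt : ∀ t : ℝ, f n t * Complex.exp (-(t:ℂ) * (x:ℂ))
          = (Set.Ioc (0:ℝ) ((n:ℝ)+1)).indicator
              (fun t => ((g t * Real.exp (-(x*t)) : ℝ) : ℂ)) t := by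
        intro t
        by_cases hm : t ∈ Set.Ioc (0:ℝ) ((n:ℝ)+1)
        · rw [hfdef]
          simp only [Set.indicator_of_mem hm]
          rw [show (-(t:ℂ) * (x:ℂ)) = ((-(x*t) : ℝ) : ℂ) by push_cast; ring]
          push_cast
          ring
        · rw [hfdef]
          simp [Set.indicator_of_notMem hm]
      rw [integral_congr_ae (ae_of_all _ hpt), integral_indicator measurableSet_Ioc,
        Measure.restrict_restrict measurableSet_Ioc,
        Set.inter_eq_self_of_subset_left (hsub n)]
      exact integral_ofReal
    have h0 : 0 ≤ ∫ t in Set.Ioc (0:ℝ) ((n:ℝ)+1), g t * Real.exp (-(x*t)) := by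
      refine setIntegral_nonneg measurableSet_Ioc ?_
      intro t ht
      exact mul_nonneg (hgpos t ht.1).le (Real.exp_pos _).le
    have hJeq : J n = ENNReal.ofReal (∫ t in Set.Ioc (0:ℝ) ((n:ℝ)+1), E t) := by
      rw [MeasureTheory.ofReal_integral_eq_lintegral_ofReal hEn
        ((ae_restrict_iff' measurableSet_Ioc).2 (ae_of_all _ fun t ht => (hEpos t ht.1).le))]
    rw [hlapeq, ← enorm_eq_nnnorm, ← ofReal_norm, Complex.norm_real, Real.norm_eq_abs,
      _root_.abs_of_nonneg h0, hJeq]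
    exact ENNReal.ofReal_le_ofReal hmono2
  -- the set S
  set S : Set ℂ := Complex.ofReal '' Set.Ioc (0:ℝ) r with hSdef
  have hSmeas : MeasurableSet S :=
    (Complex.isometry_ofReal.isClosedEmbedding.measurableEmbedding.measurableSet_image).2
      measurableSet_Ioc
  -- (C) lower bound for the LHS of the embedding inequality
  have hlow : ∀ n, (J n) ^ q * μ S ≤ ∫⁻ z, (‖laplaceT (f n) z‖₊ : ℝ≥0∞) ^ q ∂μ := by
    intro n
    calc (J n) ^ q * μ S = ∫⁻ _ in S, (J n) ^ q ∂μ := (setLIntegral_const S _).symm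
    _ ≤ ∫⁻ z in S, (‖laplaceT (f n) z‖₊ : ℝ≥0∞) ^ q ∂μ := by
        refine setLIntegral_mono' hSmeas ?_
        rintro z ⟨x, hx, rfl⟩
        exact ENNReal.rpow_le_rpow (hlap n x hx.1 hx.2) hq0.le
    _ ≤ _ := setLIntegral_le_lintegral _ _
  -- (D) main bound for each n
  have hmain : ∀ n, μ S ≤ ENNReal.ofReal (C ^ q) * (J n) ^ (-(q / (p / (p - 1)))) := by
    intro n
    have hJ0 := (hJpos n).ne'
    have hJt := hJtop n
    have hb1 : (∫⁻ z, (‖laplaceT (f n) z‖₊ : ℝ≥0∞) ^ q ∂μ) ^ (1/q)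
        ≤ ENNReal.ofReal C * (J n) ^ (1/p) := by
      have h := hb (f n) (hfmeas n)
      rwa [lpwNorm, hnormA n] at h
    have h2 : (J n) * (μ S) ^ (1/q) ≤ ENNReal.ofReal C * (J n) ^ (1/p) := by
      refine le_trans ?_ hb1
      have h := ENNReal.rpow_le_rpow (hlow n) (by positivity : (0:ℝ) ≤ 1/q)
      rwa [ENNReal.mul_rpow_of_nonneg _ _ (by positivity), ← ENNReal.rpow_mul,
        mul_one_div_cancel hq0.ne', ENNReal.rpow_one] at h
    have h3 : (μ S) ^ (1/q) ≤ ENNReal.ofReal C * (J n) ^ (1/p + (-1)) := by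
      have h := mul_le_mul_right h2 (J n)⁻¹
      rwa [← mul_assoc, ENNReal.inv_mul_cancel hJ0 hJt, one_mul,
        show (J n)⁻¹ * (ENNReal.ofReal C * (J n) ^ (1/p))
          = ENNReal.ofReal C * ((J n) ^ (1/p) * (J n) ^ (-1:ℝ)) by
            rw [ENNReal.rpow_neg_one]; ring,
        ← ENNReal.rpow_add _ _ hJ0 hJt] at h
    have h4 : μ S ≤ (ENNReal.ofReal C) ^ q * (J n) ^ ((1/p + (-1)) * q) := by
      have h := ENNReal.rpow_le_rpow h3 hq0.le
      rwa [← ENNReal.rpow_mul, one_div, inv_mul_cancel₀ hq0.ne', ENNReal.rpow_one,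
        ENNReal.mul_rpow_of_nonneg _ _ hq0.le, ← ENNReal.rpow_mul] at h
    calc μ S ≤ _ := h4
    _ = ENNReal.ofReal (C ^ q) * (J n) ^ (-(q / (p / (p - 1)))) := by
        rw [ENNReal.ofReal_rpow_of_pos hCpos,
          show ((1/p + (-1)) * q : ℝ) = -(q / (p / (p - 1))) by field_simp; ring]
  -- limit as n → ∞
  have hIocmono : ∀ {a b : ℕ}, a ≤ b →
      Set.Ioc (0:ℝ) ((a:ℝ)+1) ⊆ Set.Ioc (0:ℝ) ((b:ℝ)+1) := by
    intro a b hab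
    refine Set.Ioc_subset_Ioc_right ?_
    have : ((a:ℕ):ℝ) ≤ ((b:ℕ):ℝ) := Nat.cast_le.mpr hab
    linarith
  have hmonoJ : Monotone J := fun a b hab => lintegral_mono_set (hIocmono hab)
  have hsupJ : (⨆ n, J n) = I := by
    have hrw : ∀ n, J n = ∫⁻ t in Set.Ioi (0:ℝ),
        (Set.Ioc (0:ℝ) ((n:ℝ)+1)).indicator (fun t => ENNReal.ofReal (E t)) t := by
      intro n
      rw [lintegral_indicator measurableSet_Ioc, Measure.restrict_restrict measurableSet_Ioc,
        Set.inter_eq_self_of_subset_left (hsub n)]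
    simp_rw [hrw]
    rw [← lintegral_iSup
      (fun n => hEmeas.ennreal_ofReal.indicator measurableSet_Ioc)
      (fun a b hab => Set.indicator_le_indicator_of_subset (hIocmono hab)
        (fun _ => zero_le))]
    rw [hIeq]
    refine setLIntegral_congr_fun measurableSet_Ioi ?_
    intro t ht
    apply le_antisymm
    · exact iSup_le fun n => Set.indicator_le_self _ _ t
    · refine le_iSup_of_le ⌈t⌉₊ ?_
      have hmem : t ∈ Set.Ioc (0:ℝ) ((⌈t⌉₊:ℝ)+1) := ⟨ht, by linarith [Nat.le_ceil t]⟩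
      rw [Set.indicator_of_mem hmem]
  have htendJ : Tendsto J atTop (𝓝 I) := hsupJ ▸ tendsto_atTop_iSup hmonoJ
  have htend2 : Tendsto (fun n => ENNReal.ofReal (C ^ q) * (J n) ^ (-(q / (p / (p - 1)))))
      atTop (𝓝 (ENNReal.ofReal (C ^ q) * I ^ (-(q / (p / (p - 1)))))) :=
    ENNReal.Tendsto.const_mul ((ENNReal.continuous_rpow_const.tendsto I).comp htendJ)
      (Or.inr ENNReal.ofReal_ne_top)
  exact ge_of_tendsto' htend2 hmain
end

section
/- Let 1 ≤ p < ∞, let w be a measurable weight on (0,∞), let f ∈ L^p_w(0,∞), and let x > 0. Let (t_k)_{k∈ℤ} be a nondecreasing sequence of nonnegative reals with t₀ = 1, inf_{k} t_k = 0 and sup_k t_k = ∞, and for each k ∈ ℤ let t*_k > 0 be such that e^{−t*_k} / w(t*_k x)^{1/p} ≥ e^{−t} / w(t x)^{1/p} for all t ∈ (t_k, t_{k+1}). Define g(t) := w(t)^{1/p} f(t) for t > 0 and g(t) := 0 for t ≤ 0, let Mg(x) := sup_{r>0} (1/(2r)) ∫_{|y|≤r} |g(x−y)| dy be the Hardy–Littlewood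 maximal function of g at x, and set Θ := 2 [ Σ_{k=−∞}^{−1} e^{−t*_k} w(t*_k x)^{−1/p} (1 − t_k) + Σ_{k=0}^{∞} e^{−t*_k} w(t*_k x)^{−1/p} (t_{k+1} − 1) ]. Then ∫₀^∞ e^{−t/x} |f(t)| dt ≤ Θ · x · Mg(x). -/
open MeasureTheory Set Complex Filter ENNReal

/-- the maximal-function estimate
`∫₀^∞ e^{-t/x} |f(t)| dt ≤ Θ(P,w,x) · x · Mg(x)`, where `g = w^{1/p} f` (extended by
`0` to `t ≤ 0`), `Mg` is the Hardy–Littlewood maximal function, and `Θ` is the sum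
associated to the partition `(t_k)_{k∈ℤ}` and the points `(t*_k)`. -/
theorem lintegral_exp_mul_le_maximal
    (p : ℝ) (hp : 1 ≤ p)
    (w : ℝ → ℝ) (hw : Measurable w) (hwpos : ∀ s > 0, 0 < w s)
    (f : ℝ → ℂ) (hf : Measurable f) (hfLp : lpwNorm p w f < ⊤)
    (x : ℝ) (hx : 0 < x)
    (t : ℤ → ℝ) (htmono : Monotone t) (htnn : ∀ k, 0 ≤ t k) (ht0 : t 0 = 1)
    (htinf : ∀ ε > 0, ∃ k, t k < ε) (htsup : ∀ M : ℝ, ∃ k, M < t k)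
    (ts : ℤ → ℝ) (hts : ∀ k, 0 < ts k)
    (htsmax : ∀ k : ℤ, ∀ s ∈ Set.Ioo (t k) (t (k + 1)),
      Real.exp (-s) * (w (s * x)) ^ (-(1/p)) ≤
        Real.exp (-(ts k)) * (w (ts k * x)) ^ (-(1/p)))
    (g : ℝ → ℂ)
    (hg : ∀ s : ℝ, g s = if 0 < s then (((w s) ^ (1/p) : ℝ) : ℂ) * f s else 0) :
    ∫⁻ s in Set.Ioi (0:ℝ), ENNReal.ofReal (Real.exp (-(s / x))) * (‖f s‖₊ : ℝ≥0∞) ≤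
      (2 * ((∑' k : ℕ, ENNReal.ofReal
              (Real.exp (-(ts (-(k + 1 : ℤ)))) *
                (w (ts (-(k + 1 : ℤ)) * x)) ^ (-(1/p)) * (1 - t (-(k + 1 : ℤ))))) +
            ∑' k : ℕ, ENNReal.ofReal
              (Real.exp (-(ts (k : ℤ))) *
                (w (ts (k : ℤ) * x)) ^ (-(1/p)) * (t ((k : ℤ) + 1) - 1)))) *
        ENNReal.ofReal x *
        ⨆ (r : ℝ) (_ : 0 < r),
          (ENNReal.ofReal (2 * r))⁻¹ * ∫⁻ y in Set.Icc (-r) r, (‖g (x - y)‖₊ : ℝ≥0∞) := by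
  set M := ⨆ (r : ℝ) (_ : 0 < r),
      (ENNReal.ofReal (2 * r))⁻¹ * ∫⁻ y in Set.Icc (-r) r, (‖g (x - y)‖₊ : ℝ≥0∞) with hM
  set c : ℤ → ℝ := fun k => Real.exp (-(ts k)) * (w (ts k * x)) ^ (-(1/p)) with hc
  set D : ℤ → ℝ := fun k => if 0 ≤ k then t (k+1) - 1 else 1 - t k with hDdef
  have hcnn : ∀ k, 0 ≤ c k := fun k =>
    mul_nonneg (Real.exp_nonneg _) (Real.rpow_nonneg (hwpos _ (mul_pos (hts k) hx)).le _)
  -- the cover of (0,∞) by the intervals (x t_k, x t_{k+1}]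
  have hcover : Set.Ioi (0:ℝ) = ⋃ k : ℤ, Set.Ioc (x * t k) (x * t (k+1)) := by
    ext s
    simp only [Set.mem_Ioi, Set.mem_iUnion, Set.mem_Ioc]
    constructor
    · intro hs
      obtain ⟨k0, hk0⟩ := htinf (s/x) (by positivity)
      obtain ⟨j, hj⟩ := htsup (s/x)
      have Hinh : ∃ z : ℤ, x * t z < s := by
        refine ⟨k0, ?_⟩
        have := (lt_div_iff₀ hx).mp hk0
        linarith [this]
      have Hbdd : ∃ b : ℤ, ∀ z : ℤ, x * t z < s → z ≤ b := by
        refine ⟨j, fun z hz => ?_⟩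
        by_contra hzj
        push_neg at hzj
        have h1 : t j ≤ t z := htmono hzj.le
        have h2 : s < x * t j := by
          rw [div_lt_iff₀ hx] at hj
          linarith [hj]
        linarith [mul_le_mul_of_nonneg_left h1 hx.le]
      obtain ⟨k, hk, hkmax⟩ := Int.exists_greatest_of_bdd Hbdd Hinh
      refine ⟨k, hk, ?_⟩
      by_contra h
      push_neg at h
      exact absurd (hkmax (k+1) h) (by omega)
    · rintro ⟨k, h1, _⟩
      exact lt_of_le_of_lt (mul_nonneg hx.le (htnn k)) h1
  have hdisj : Pairwise (Function.onFun Disjoint fun k : ℤ => Set.Ioc (x * t k) (x * t (k+1))) := by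
    have hmono : Monotone fun k : ℤ => x * t k :=
      fun a b hab => mul_le_mul_of_nonneg_left (htmono hab) hx.le
    have := hmono.pairwise_disjoint_on_Ioc_succ
    simpa using this
  have hMge : ∀ r : ℝ, 0 < r →
      (ENNReal.ofReal (2 * r))⁻¹ * (∫⁻ y in Set.Icc (-r) r, (‖g (x - y)‖₊ : ℝ≥0∞)) ≤ M := by
    intro r hr
    exact le_iSup₂ (f := fun (r : ℝ) (_ : 0 < r) =>
      (ENNReal.ofReal (2 * r))⁻¹ * ∫⁻ y in Set.Icc (-r) r, (‖g (x - y)‖₊ : ℝ≥0∞)) r hr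
  -- the geometric estimate via the maximal function
  have hgeo : ∀ a b r : ℝ, 0 < r → -r ≤ x - x * b → x - x * a ≤ r →
      ∫⁻ s in Set.Ioo (x*a) (x*b), (‖g s‖₊ : ℝ≥0∞) ≤ ENNReal.ofReal (2*r) * M := by
    intro a b r hr h1 h2
    have hmp : MeasurePreserving (fun y : ℝ => x - y) volume volume :=
      Measure.measurePreserving_sub_left volume x
    have hemb : MeasurableEmbedding (fun y : ℝ => x - y) :=
      (MeasurableEquiv.subLeft x).measurableEmbedding
    have key := hmp.setLIntegral_comp_preimage_emb hemb
      (fun s => (‖g s‖₊ : ℝ≥0∞)) (Set.Ioo (x*a) (x*b))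
    have hpre : (fun y : ℝ => x - y) ⁻¹' (Set.Ioo (x*a) (x*b))
        = Set.Ioo (x - x*b) (x - x*a) := by
      ext y
      simp only [Set.mem_preimage, Set.mem_Ioo]
      constructor <;> intro h <;> exact ⟨by linarith [h.1, h.2], by linarith [h.1, h.2]⟩
    rw [← key, hpre]
    calc ∫⁻ y in Set.Ioo (x - x*b) (x - x*a), (‖g (x - y)‖₊ : ℝ≥0∞)
        ≤ ∫⁻ y in Set.Icc (-r) r, (‖g (x - y)‖₊ : ℝ≥0∞) := by
          refine lintegral_mono_set fun y hy => ?_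
          exact ⟨by linarith [hy.1, hy.2], by linarith [hy.1, hy.2]⟩
      _ = ENNReal.ofReal (2*r) *
          ((ENNReal.ofReal (2*r))⁻¹ * ∫⁻ y in Set.Icc (-r) r, (‖g (x - y)‖₊ : ℝ≥0∞)) := by
          rw [← mul_assoc, ENNReal.mul_inv_cancel
            (ENNReal.ofReal_pos.mpr (by linarith)).ne' ENNReal.ofReal_ne_top, one_mul]
      _ ≤ ENNReal.ofReal (2*r) * M := mul_le_mul_right (hMge r hr) _
  -- per-interval bound for the integral of ‖g‖
  have hDbound : ∀ k : ℤ, ∫⁻ s in Set.Ioo (x * t k) (x * t (k+1)), (‖g s‖₊ : ℝ≥0∞)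
      ≤ ENNReal.ofReal (2 * D k) * (ENNReal.ofReal x * M) := by
    intro k
    rcases le_or_gt 0 k with hk | hk
    · have h1 : (1:ℝ) ≤ t k := ht0 ▸ htmono hk
      have h2 : (1:ℝ) ≤ t (k+1) := h1.trans (htmono (by omega))
      have hDk : D k = t (k+1) - 1 := if_pos hk
      rcases eq_or_lt_of_le (sub_nonneg.mpr h2) with h0 | h0
      · have ht1 : t (k+1) = 1 := by linarith [h0.symm ▸ (rfl : t (k+1) - 1 = t (k+1) - 1)]
        have htk : t k = 1 := le_antisymm (ht1 ▸ htmono (by omega : k ≤ k+1)) h1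
        rw [htk, ht1]
        simp
      · have hb := hgeo (t k) (t (k+1)) ((t (k+1) - 1) * x)
          (by positivity) (le_of_eq (by ring)) ?_
        · refine hb.trans (le_of_eq ?_)
          rw [show 2*((t (k+1)-1)*x) = (2*(t (k+1)-1))*x from by ring,
            ENNReal.ofReal_mul (by positivity), hDk, mul_assoc]
        · nlinarith [mul_le_mul_of_nonneg_right
            (show (1:ℝ) - t k ≤ t (k+1) - 1 by linarith) hx.le]
    · have h1 : t k ≤ 1 := ht0 ▸ htmono hk.le
      have h2 : t (k+1) ≤ 1 := ht0 ▸ htmono (by omega : k+1 ≤ 0)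
      have hDk : D k = 1 - t k := if_neg (not_le.mpr hk)
      rcases eq_or_lt_of_le (sub_nonneg.mpr h1) with h0 | h0
      · have htk : t k = 1 := by linarith [h0.symm ▸ (rfl : 1 - t k = 1 - t k)]
        have hioo : Set.Ioo (x * t k) (x * t (k+1)) = ∅ := by
          apply Set.Ioo_eq_empty
          rw [htk]
          exact not_lt.mpr (mul_le_mul_of_nonneg_left h2 hx.le)
        rw [hioo]
        simp
      · have hb := hgeo (t k) (t (k+1)) ((1 - t k) * x)
          (by positivity) ?_ (le_of_eq (by ring))
        · refine hb.trans (le_of_eq ?_)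
          rw [show 2*((1 - t k)*x) = (2*(1 - t k))*x from by ring,
            ENNReal.ofReal_mul (by positivity), hDk, mul_assoc]
        · nlinarith [mul_le_mul_of_nonneg_right
            (show -(1 - t k) ≤ 1 - t (k+1) by linarith) hx.le]
    -- per-interval full bound
  have hper : ∀ k : ℤ, ∫⁻ s in Set.Ioc (x * t k) (x * t (k+1)),
      ENNReal.ofReal (Real.exp (-(s / x))) * (‖f s‖₊ : ℝ≥0∞)
      ≤ ENNReal.ofReal (c k * D k) * (2 * ENNReal.ofReal x * M) := by
    intro k
    rw [← setLIntegral_congr (Ioo_ae_eq_Ioc (a := x * t k) (b := x * t (k+1)))]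
    have hpt : ∀ s ∈ Set.Ioo (x * t k) (x * t (k+1)),
        ENNReal.ofReal (Real.exp (-(s / x))) * (‖f s‖₊ : ℝ≥0∞)
          ≤ ENNReal.ofReal (c k) * (‖g s‖₊ : ℝ≥0∞) := by
      intro s hs
      have hs0 : 0 < s := lt_of_le_of_lt (mul_nonneg hx.le (htnn k)) hs.1
      have hws : 0 < w s := hwpos s hs0
      have hgs : ‖g s‖ = w s ^ (1/p) * ‖f s‖ := by
        rw [hg s, if_pos hs0, norm_mul, Complex.norm_real, Real.norm_eq_abs,
          abs_of_pos (Real.rpow_pos_of_pos hws _)]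
      have hmem : s / x ∈ Set.Ioo (t k) (t (k+1)) :=
        ⟨(lt_div_iff₀ hx).mpr (by linarith [hs.1]), (div_lt_iff₀ hx).mpr (by linarith [hs.2])⟩
      have hmax := htsmax k (s/x) hmem
      rw [div_mul_cancel₀ _ hx.ne'] at hmax
      have hiden : Real.exp (-(s/x)) * ‖f s‖
          = (Real.exp (-(s/x)) * w s ^ (-(1/p))) * ‖g s‖ := by
        have hone : w s ^ (-(1/p)) * w s ^ (1/p) = 1 := by
          rw [← Real.rpow_add hws]; norm_num
        calc Real.exp (-(s/x)) * ‖f s‖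
            = Real.exp (-(s/x)) * ((w s ^ (-(1/p)) * w s ^ (1/p)) * ‖f s‖) := by
              rw [hone, one_mul]
          _ = (Real.exp (-(s/x)) * w s ^ (-(1/p))) * (w s ^ (1/p) * ‖f s‖) := by ring
          _ = _ := by rw [hgs]
      have hreal : Real.exp (-(s/x)) * ‖f s‖ ≤ c k * ‖g s‖ := by
        rw [hiden]
        exact mul_le_mul_of_nonneg_right hmax (norm_nonneg _)
      calc ENNReal.ofReal (Real.exp (-(s / x))) * (‖f s‖₊ : ℝ≥0∞)
          = ENNReal.ofReal (Real.exp (-(s/x)) * ‖f s‖) := by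
            rw [ENNReal.ofReal_mul (Real.exp_nonneg _), (ofReal_norm _).trans (enorm_eq_nnnorm _)]
        _ ≤ ENNReal.ofReal (c k * ‖g s‖) := ENNReal.ofReal_le_ofReal hreal
        _ = ENNReal.ofReal (c k) * (‖g s‖₊ : ℝ≥0∞) := by
            rw [ENNReal.ofReal_mul (hcnn k), (ofReal_norm _).trans (enorm_eq_nnnorm _)]
    calc ∫⁻ s in Set.Ioo (x * t k) (x * t (k+1)),
          ENNReal.ofReal (Real.exp (-(s / x))) * (‖f s‖₊ : ℝ≥0∞)
        ≤ ∫⁻ s in Set.Ioo (x * t k) (x * t (k+1)),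
            ENNReal.ofReal (c k) * (‖g s‖₊ : ℝ≥0∞) :=
          setLIntegral_mono' measurableSet_Ioo hpt
      _ = ENNReal.ofReal (c k) * ∫⁻ s in Set.Ioo (x * t k) (x * t (k+1)), (‖g s‖₊ : ℝ≥0∞) :=
          lintegral_const_mul' _ _ ENNReal.ofReal_ne_top
      _ ≤ ENNReal.ofReal (c k) * (ENNReal.ofReal (2 * D k) * (ENNReal.ofReal x * M)) :=
          mul_le_mul_right (hDbound k) _
      _ = ENNReal.ofReal (c k * D k) * (2 * ENNReal.ofReal x * M) := by
          rw [ENNReal.ofReal_mul (hcnn k),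
            ENNReal.ofReal_mul (by norm_num : (0:ℝ) ≤ 2), ENNReal.ofReal_ofNat]
          ring
  calc ∫⁻ s in Set.Ioi (0:ℝ), ENNReal.ofReal (Real.exp (-(s / x))) * (‖f s‖₊ : ℝ≥0∞)
      = ∑' k : ℤ, ∫⁻ s in Set.Ioc (x * t k) (x * t (k+1)),
          ENNReal.ofReal (Real.exp (-(s / x))) * (‖f s‖₊ : ℝ≥0∞) := by
        rw [hcover, lintegral_iUnion (fun k => measurableSet_Ioc) hdisj]
    _ ≤ ∑' k : ℤ, ENNReal.ofReal (c k * D k) * (2 * ENNReal.ofReal x * M) :=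
        ENNReal.tsum_le_tsum hper
    _ = (∑' k : ℤ, ENNReal.ofReal (c k * D k)) * (2 * ENNReal.ofReal x * M) :=
        ENNReal.tsum_mul_right
    _ = ((∑' n : ℕ, ENNReal.ofReal (c n * D n))
          + ∑' n : ℕ, ENNReal.ofReal (c (-(n+1)) * D (-(n+1))))
          * (2 * ENNReal.ofReal x * M) := by
        rw [tsum_of_nat_of_neg_add_one ENNReal.summable ENNReal.summable]
    _ = _ := by
        have e1 : (∑' n : ℕ, ENNReal.ofReal (c n * D n))
            = ∑' k : ℕ, ENNReal.ofReal
              (Real.exp (-(ts (k : ℤ))) *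
                (w (ts (k : ℤ) * x)) ^ (-(1/p)) * (t ((k : ℤ) + 1) - 1)) := by
          refine tsum_congr fun n => ?_
          simp only [hc, hDdef, if_pos (Int.natCast_nonneg n)]
        have e2 : (∑' n : ℕ, ENNReal.ofReal (c (-(n+1)) * D (-(n+1))))
            = ∑' k : ℕ, ENNReal.ofReal
              (Real.exp (-(ts (-(k + 1 : ℤ)))) *
                (w (ts (-(k + 1 : ℤ)) * x)) ^ (-(1/p)) * (1 - t (-(k + 1 : ℤ)))) := by
          refine tsum_congr fun n => ?_
          simp only [hc, hDdef, if_neg (by omega : ¬ (0:ℤ) ≤ -((n:ℤ)+1))]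
        rw [e1, e2]
        ring
end
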